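/- arXiv:2507.07028 — 14 statements merged into one kernel-verified Lean document; each statement's English description precedes it below -/
import Mathlib

section
/- Let m and t be naturals with 1 ≤ t < m, and let N be an m × m real orthogonal matrix (N·Nᵀ = I) written in block form N = [[U, V], [W, D]], where U is t × t, V is t × (m−t), W is (m−t) × t, and D is (m−t) × (m−t). If the matrix I + U is invertible, then Y₁ = D − W·(I + U)⁻¹·V is an orthogonal matrix of order m − t, i.e., Y₁·Y₁ᵀ = I. -/
open Matrix

theorem stmt_0 (m t : ℕ) (ht : 1 ≤ t) (htm : t < m)
    (U : Matrix (Fin t) (Fin t) ℝ) (V : Matrix (Fin t) (Fin (m - t)) ℝ)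
    (W : Matrix (Fin (m - t)) (Fin t) ℝ) (D : Matrix (Fin (m - t)) (Fin (m - t)) ℝ)
    (hN : Matrix.fromBlocks U V W D * (Matrix.fromBlocks U V W D)ᵀ = 1)
    (hU : IsUnit (1 + U)) :
    (D - W * (1 + U)⁻¹ * V) * (D - W * (1 + U)⁻¹ * V)ᵀ = 1 := by
  set E : Matrix (Fin t) (Fin t) ℝ := (1 + U)⁻¹ with hEdef
  have hdet : IsUnit (1 + U).det := (Matrix.isUnit_iff_isUnit_det _).mp hU
  have hE1 : (1 + U) * E = 1 := Matrix.mul_nonsing_inv _ hdet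
  have hE2 : E * (1 + U) = 1 := Matrix.nonsing_inv_mul _ hdet
  have hF1 : (1 + Uᵀ) * Eᵀ = 1 := by
    have := congrArg Matrix.transpose hE2
    simpa [Matrix.transpose_mul, Matrix.transpose_add] using this
  have hF2 : Eᵀ * (1 + Uᵀ) = 1 := by
    have := congrArg Matrix.transpose hE1
    simpa [Matrix.transpose_mul, Matrix.transpose_add] using this
  -- block equations
  rw [Matrix.fromBlocks_transpose, Matrix.fromBlocks_multiply, ← Matrix.fromBlocks_one] at hN
  obtain ⟨h11, h12, h21, h22⟩ := Matrix.fromBlocks_inj.mp hN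
  have h1 : D * Dᵀ = 1 - W * Wᵀ := by rw [eq_sub_iff_add_eq, add_comm]; exact h22
  have h2 : D * Vᵀ = -(W * Uᵀ) := eq_neg_of_add_eq_zero_right h21
  have h3 : V * Dᵀ = -(U * Wᵀ) := eq_neg_of_add_eq_zero_right h12
  have h4 : V * Vᵀ = 1 - U * Uᵀ := by rw [eq_sub_iff_add_eq, add_comm]; exact h11
  have hEU : E * U = 1 - E := by
    rw [eq_sub_iff_add_eq]
    calc E * U + E = E * (1 + U) := by rw [Matrix.mul_add, Matrix.mul_one, add_comm]
    _ = 1 := hE2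
  have hUF : Uᵀ * Eᵀ = 1 - Eᵀ := by
    rw [eq_sub_iff_add_eq]
    calc Uᵀ * Eᵀ + Eᵀ = (1 + Uᵀ) * Eᵀ := by rw [Matrix.add_mul, Matrix.one_mul, add_comm]
    _ = 1 := hF1
  have hEF : E * (1 - U * Uᵀ) * Eᵀ = Eᵀ + E - 1 := by
    have key : (1 : Matrix (Fin t) (Fin t) ℝ) - U * Uᵀ
        = (1 + U) + (1 + Uᵀ) - (1 + U) * (1 + Uᵀ) := by
      simp only [Matrix.mul_add, Matrix.add_mul, Matrix.mul_one, Matrix.one_mul]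
      abel
    calc E * (1 - U * Uᵀ) * Eᵀ
        = (E * (1 + U)) * Eᵀ + E * ((1 + Uᵀ) * Eᵀ) - (E * (1 + U)) * ((1 + Uᵀ) * Eᵀ) := by
          rw [key]
          simp only [Matrix.mul_add, Matrix.add_mul, Matrix.mul_sub, Matrix.sub_mul,
            Matrix.mul_assoc]
    _ = Eᵀ + E - 1 := by rw [hE2, hF1]; simp
  rw [Matrix.transpose_sub, Matrix.transpose_mul, Matrix.transpose_mul, ← Matrix.mul_assoc]
  calc (D - W * E * V) * (Dᵀ - Vᵀ * Eᵀ * Wᵀ)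
      = D * Dᵀ - (D * Vᵀ) * Eᵀ * Wᵀ - W * E * (V * Dᵀ) + W * (E * (V * Vᵀ) * Eᵀ) * Wᵀ := by
        simp only [Matrix.mul_sub, Matrix.sub_mul, Matrix.mul_assoc]
        abel
    _ = (1 - W * Wᵀ) - (-(W * Uᵀ)) * Eᵀ * Wᵀ - W * E * (-(U * Wᵀ))
        + W * (E * (1 - U * Uᵀ) * Eᵀ) * Wᵀ := by rw [h1, h2, h3, h4]
    _ = 1 - W * Wᵀ + W * (Uᵀ * Eᵀ) * Wᵀ + W * (E * U) * Wᵀ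
        + W * (E * (1 - U * Uᵀ) * Eᵀ) * Wᵀ := by
        simp only [Matrix.neg_mul, Matrix.mul_neg, sub_neg_eq_add, Matrix.mul_assoc]
    _ = 1 - W * Wᵀ + W * (1 - Eᵀ) * Wᵀ + W * (1 - E) * Wᵀ + W * (Eᵀ + E - 1) * Wᵀ := by
        rw [hEU, hUF, hEF]
    _ = 1 := by
        simp only [Matrix.mul_sub, Matrix.sub_mul, Matrix.mul_add, Matrix.add_mul,
          Matrix.mul_one, Matrix.one_mul, Matrix.mul_assoc]
        abel
end

section
/- Let m and t be naturals with 1 ≤ t < m, and let N be an m × m real orthogonal matrix (N·Nᵀ = I) written in block form N = [[U, V], [W, D]], where U is t × t, V is t × (m−t), W is (m−t) × t, and D is (m−t) × (m−t). If the matrix I − U is invertible, then Y₂ = D + W·(I − U)⁻¹·V is an orthogonal matrix of order m − t, i.e., Y₂·Y₂ᵀ = I. -/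
open Matrix

theorem stmt_1 (m t : ℕ) (ht : 1 ≤ t) (htm : t < m)
    (U : Matrix (Fin t) (Fin t) ℝ) (V : Matrix (Fin t) (Fin (m - t)) ℝ)
    (W : Matrix (Fin (m - t)) (Fin t) ℝ) (D : Matrix (Fin (m - t)) (Fin (m - t)) ℝ)
    (hN : Matrix.fromBlocks U V W D * (Matrix.fromBlocks U V W D)ᵀ = 1)
    (hU : IsUnit (1 - U)) :
    (D + W * (1 - U)⁻¹ * V) * (D + W * (1 - U)⁻¹ * V)ᵀ = 1 := by
  rw [Matrix.fromBlocks_transpose, Matrix.fromBlocks_multiply,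
    ← Matrix.fromBlocks_one] at hN
  have h11 : U * Uᵀ + V * Vᵀ = 1 := congrArg Matrix.toBlocks₁₁ hN
  have h12 : U * Wᵀ + V * Dᵀ = 0 := congrArg Matrix.toBlocks₁₂ hN
  have h21 : W * Uᵀ + D * Vᵀ = 0 := congrArg Matrix.toBlocks₂₁ hN
  have h22 : W * Wᵀ + D * Dᵀ = 1 := congrArg Matrix.toBlocks₂₂ hN
  have hVV : V * Vᵀ = 1 - U * Uᵀ := eq_sub_of_add_eq' h11
  have hVD : V * Dᵀ = -(U * Wᵀ) := eq_neg_of_add_eq_zero_right h12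
  have hDV : D * Vᵀ = -(W * Uᵀ) := eq_neg_of_add_eq_zero_right h21
  have hDD : D * Dᵀ = 1 - W * Wᵀ := eq_sub_of_add_eq' h22
  set A := (1 - U)⁻¹ with hAdef
  have hdet : IsUnit (1 - U).det := (Matrix.isUnit_iff_isUnit_det _).mp hU
  have hA1 : (1 - U) * A = 1 := Matrix.mul_nonsing_inv _ hdet
  have hA2 : A * (1 - U) = 1 := Matrix.nonsing_inv_mul _ hdet
  have hTt : (1 - U)ᵀ = 1 - Uᵀ := by
    rw [Matrix.transpose_sub, Matrix.transpose_one]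
  have hA2t : (1 - Uᵀ) * Aᵀ = 1 := by
    rw [← hTt, ← Matrix.transpose_mul, hA2, Matrix.transpose_one]
  have decomp : (1 : Matrix (Fin t) (Fin t) ℝ) - U * Uᵀ
      = (1 - U) * (1 - Uᵀ) + U * (1 - Uᵀ) + (1 - U) * Uᵀ := by
    noncomm_ring
  have key : A * (1 - U * Uᵀ) * Aᵀ = 1 + A * U + Uᵀ * Aᵀ := by
    calc A * (1 - U * Uᵀ) * Aᵀ
        = A * (1 - U) * ((1 - Uᵀ) * Aᵀ) + A * U * ((1 - Uᵀ) * Aᵀ)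
          + A * (1 - U) * (Uᵀ * Aᵀ) := by rw [decomp]; noncomm_ring
      _ = 1 + A * U + Uᵀ * Aᵀ := by
          rw [hA2, hA2t, mul_one, mul_one, one_mul]
  have expand : (D + W * A * V) * (D + W * A * V)ᵀ
      = D * Dᵀ + (D * Vᵀ) * (Aᵀ * Wᵀ) + W * A * (V * Dᵀ)
        + W * (A * (V * Vᵀ) * Aᵀ) * Wᵀ := by
    simp only [Matrix.transpose_add, Matrix.transpose_mul, Matrix.add_mul,
      Matrix.mul_add, Matrix.mul_assoc]
    abel
  rw [expand, hDD, hDV, hVD, hVV, key]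
  simp only [Matrix.mul_add, Matrix.add_mul, Matrix.mul_one, Matrix.one_mul,
    Matrix.mul_neg, Matrix.neg_mul, Matrix.mul_assoc]
  abel
end

section
/- Let n, t be naturals with t ≥ 1 and t² < 4n. Let H be a real Hadamard matrix of order 4n written in block form H = [[U, V], [W, D]] with U of size t × t, V of size t × (4n−t), W of size (4n−t) × t, and D of size (4n−t) × (4n−t). Then I + (1/√(4n))·U is invertible, the matrix Y₁ = (1/√(4n))·D − (1/(4n))·W·(I + (1/√(4n))·U)⁻¹·V is an orthogonal matrix of order 4n − t, and every entry of Y₁ satisfies (1/√(4n))·(1 − t/(√(4n) − t)) ≤ |(Y₁)_{ij}| ≤ (1/√(4n))·(1 + t/(√(4n) − t)). -/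
open Matrix

set_option maxHeartbeats 2000000 in
theorem stmt_6 (n t : ℕ) (ht : 1 ≤ t) (htn : t * t < 4 * n)
    (U : Matrix (Fin t) (Fin t) ℝ) (V : Matrix (Fin t) (Fin (4 * n - t)) ℝ)
    (W : Matrix (Fin (4 * n - t)) (Fin t) ℝ)
    (D : Matrix (Fin (4 * n - t)) (Fin (4 * n - t)) ℝ)
    (hent : ∀ i j, Matrix.fromBlocks U V W D i j = 1 ∨ Matrix.fromBlocks U V W D i j = -1)
    (hH : Matrix.fromBlocks U V W D * (Matrix.fromBlocks U V W D)ᵀ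
            = (4 * (n : ℝ)) • 1) :
    IsUnit (1 + (Real.sqrt (4 * (n : ℝ)))⁻¹ • U) ∧
    (let Y₁ := (Real.sqrt (4 * (n : ℝ)))⁻¹ • D -
        (4 * (n : ℝ))⁻¹ • (W * (1 + (Real.sqrt (4 * (n : ℝ)))⁻¹ • U)⁻¹ * V);
      Y₁ * Y₁ᵀ = 1 ∧
      ∀ i j, (Real.sqrt (4 * (n : ℝ)))⁻¹ *
               (1 - (t : ℝ) / (Real.sqrt (4 * (n : ℝ)) - (t : ℝ))) ≤ |Y₁ i j| ∧
             |Y₁ i j| ≤ (Real.sqrt (4 * (n : ℝ)))⁻¹ *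
               (1 + (t : ℝ) / (Real.sqrt (4 * (n : ℝ)) - (t : ℝ)))) := by
  have htR : (t:ℝ) * (t:ℝ) < 4 * (n:ℝ) := by exact_mod_cast htn
  have ht1 : (1:ℝ) ≤ (t:ℝ) := by exact_mod_cast ht
  set s : ℝ := Real.sqrt (4 * (n : ℝ)) with hsdef
  have hs2 : s * s = 4 * (n:ℝ) := Real.mul_self_sqrt (by positivity)
  have hsnn : 0 ≤ s := Real.sqrt_nonneg _
  have hts : (t:ℝ) < s := by nlinarith
  have hspos : (0:ℝ) < s := by linarith
  have hstpos : (0:ℝ) < s - t := by linarith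
  have hsne : s ≠ 0 := ne_of_gt hspos
  -- entries
  have hU : ∀ i j, |U i j| = 1 := by
    intro i j
    rcases hent (Sum.inl i) (Sum.inl j) with h | h <;>
      simp [Matrix.fromBlocks_apply₁₁] at h <;> simp [h]
  have hV : ∀ i j, |V i j| = 1 := by
    intro i j
    rcases hent (Sum.inl i) (Sum.inr j) with h | h <;>
      simp [Matrix.fromBlocks_apply₁₂] at h <;> simp [h]
  have hW : ∀ i j, |W i j| = 1 := by
    intro i j
    rcases hent (Sum.inr i) (Sum.inl j) with h | h <;>
      simp [Matrix.fromBlocks_apply₂₁] at h <;> simp [h]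
  have hD : ∀ i j, |D i j| = 1 := by
    intro i j
    rcases hent (Sum.inr i) (Sum.inr j) with h | h <;>
      simp [Matrix.fromBlocks_apply₂₂] at h <;> simp [h]
  -- block equations
  have hb := hH
  rw [Matrix.fromBlocks_transpose, Matrix.fromBlocks_multiply,
    ← Matrix.fromBlocks_one (l := Fin t) (m := Fin (4*n - t)) (α := ℝ),
    Matrix.fromBlocks_smul, Matrix.fromBlocks_inj] at hb
  obtain ⟨h11, h12, h21, h22⟩ := hb
  rw [smul_zero] at h12 h21
  -- scaled matrices
  set A := s⁻¹ • U with hAdef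
  set B := s⁻¹ • V with hBdef
  set C := s⁻¹ • W with hCdef
  set E := s⁻¹ • D with hEdef
  have hss : (s⁻¹ * s⁻¹) * (4 * (n:ℝ)) = 1 := by
    rw [← hs2]; field_simp
  have hAB : A * Aᵀ + B * Bᵀ = 1 := by
    rw [hAdef, hBdef, Matrix.transpose_smul, Matrix.transpose_smul, Matrix.smul_mul,
      Matrix.smul_mul, Matrix.mul_smul, Matrix.mul_smul, smul_smul, smul_smul,
      ← smul_add, h11, smul_smul, hss, one_smul]
  have hABE : A * Cᵀ + B * Eᵀ = 0 := by
    rw [hAdef, hBdef, hCdef, hEdef, Matrix.transpose_smul, Matrix.transpose_smul,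
      Matrix.smul_mul, Matrix.smul_mul, Matrix.mul_smul, Matrix.mul_smul, smul_smul,
      smul_smul, ← smul_add, h12, smul_zero]
  have hCAEB : C * Aᵀ + E * Bᵀ = 0 := by
    rw [hAdef, hBdef, hCdef, hEdef, Matrix.transpose_smul, Matrix.transpose_smul,
      Matrix.smul_mul, Matrix.smul_mul, Matrix.mul_smul, Matrix.mul_smul, smul_smul,
      smul_smul, ← smul_add, h21, smul_zero]
  have hCC : C * Cᵀ + E * Eᵀ = 1 := by
    rw [hCdef, hEdef, Matrix.transpose_smul, Matrix.transpose_smul, Matrix.smul_mul,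
      Matrix.smul_mul, Matrix.mul_smul, Matrix.mul_smul, smul_smul, smul_smul,
      ← smul_add, h22, smul_smul, hss, one_smul]
  have hBB : B * Bᵀ = 1 - A * Aᵀ := by rw [← hAB]; abel
  have hEB : E * Bᵀ = -(C * Aᵀ) := by
    have := hCAEB; linear_combination (norm := abel) this
  have hBE : B * Eᵀ = -(A * Cᵀ) := by
    have := hABE; linear_combination (norm := abel) this
  set T : Matrix (Fin t) (Fin t) ℝ := 1 + A with hTdef
  have hAabs : ∀ i j, |A i j| = s⁻¹ := by
    intro i j
    rw [hAdef, Matrix.smul_apply, smul_eq_mul, abs_mul, hU i j, mul_one,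
      abs_of_nonneg (inv_nonneg.mpr hsnn)]
  -- invertibility
  haveI : Nonempty (Fin t) := ⟨⟨0, ht⟩⟩
  have hunit : IsUnit T := by
    rw [← Matrix.mulVec_injective_iff_isUnit]
    intro x y hxy
    have hz : T.mulVec (x - y) = 0 := by
      rw [Matrix.mulVec_sub, hxy, sub_self]
    set z := x - y with hzdef
    have hz0 : z = 0 := by
      by_contra hne
      obtain ⟨k, -, hk⟩ := Finset.exists_max_image Finset.univ (fun j => |z j|)
        Finset.univ_nonempty
      have hkpos : 0 < |z k| := by
        rcases Function.ne_iff.mp hne with ⟨j, hj⟩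
        have := hk j (Finset.mem_univ j)
        have : 0 < |z j| := abs_pos.mpr hj
        exact lt_of_lt_of_le this (hk j (Finset.mem_univ j))
      have hzk : z k = -(A.mulVec z k) := by
        have := congrFun hz k
        rw [hTdef, Matrix.add_mulVec, Matrix.one_mulVec] at this
        simpa [eq_neg_iff_add_eq_zero] using this
      have hle : |z k| ≤ (t : ℝ) * (s⁻¹ * |z k|) := by
        calc |z k| = |A.mulVec z k| := by rw [hzk]; exact abs_neg _
          _ = |∑ j, A k j * z j| := by rfl
          _ ≤ ∑ j, |A k j * z j| := Finset.abs_sum_le_sum_abs _ _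
          _ ≤ ∑ j : Fin t, s⁻¹ * |z k| := by
              refine Finset.sum_le_sum fun j _ => ?_
              rw [abs_mul, hAabs k j]
              exact mul_le_mul_of_nonneg_left (hk j (Finset.mem_univ j))
                (inv_nonneg.mpr hsnn)
          _ = (t : ℝ) * (s⁻¹ * |z k|) := by
              rw [Finset.sum_const, Finset.card_univ, Fintype.card_fin, nsmul_eq_mul]
      have hcon : (t:ℝ) * s⁻¹ < 1 := by
        rw [← mul_inv_cancel₀ hsne]
        exact mul_lt_mul_of_pos_right hts (inv_pos.mpr hspos)
      nlinarith [hkpos, hle, hcon]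
    exact sub_eq_zero.mp hz0
  have hdet : IsUnit T.det := (Matrix.isUnit_iff_isUnit_det T).mp hunit
  set M := T⁻¹ with hMdef
  have hTM : T * M = 1 := Matrix.mul_nonsing_inv T hdet
  have hMT : M * T = 1 := Matrix.nonsing_inv_mul T hdet
  have hMTt : Tᵀ * Mᵀ = 1 := by rw [← Matrix.transpose_mul, hMT, Matrix.transpose_one]
  have hTMt : Mᵀ * Tᵀ = 1 := by rw [← Matrix.transpose_mul, hTM, Matrix.transpose_one]
  have k1 : M * A = 1 - M := by
    have : M * (1 + A) = 1 := by rw [← hTdef]; exact hMT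
    rw [Matrix.mul_add, Matrix.mul_one] at this
    linear_combination (norm := abel) this
  have k2 : Aᵀ * Mᵀ = 1 - Mᵀ := by
    rw [← Matrix.transpose_mul, k1, Matrix.transpose_sub, Matrix.transpose_one]
  have hAT : A = T - 1 := by rw [hTdef]; abel
  have hATt : Aᵀ = Tᵀ - 1 := by
    rw [hAT, Matrix.transpose_sub, Matrix.transpose_one]
  have k3 : M * (1 - A * Aᵀ) * Mᵀ = M + Mᵀ - 1 := by
    have expand : M * (1 - A * Aᵀ) * Mᵀ
        = M * T * Mᵀ + M * (Tᵀ * Mᵀ) - M * T * (Tᵀ * Mᵀ) := by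
      rw [hAT]
      simp only [Matrix.transpose_sub, Matrix.transpose_one]
      noncomm_ring
    rw [expand, hMT, hMTt]
    simp only [Matrix.one_mul, Matrix.mul_one]
    abel
  -- orthogonality
  have horth : (E - C * M * B) * (E - C * M * B)ᵀ = 1 := by
    have htr : (E - C * M * B)ᵀ = Eᵀ - Bᵀ * (Mᵀ * Cᵀ) := by
      rw [Matrix.transpose_sub, Matrix.transpose_mul, Matrix.transpose_mul]
    rw [htr, Matrix.sub_mul, Matrix.mul_sub, Matrix.mul_sub]
    have e2 : E * (Bᵀ * (Mᵀ * Cᵀ)) = -(C * Aᵀ) * (Mᵀ * Cᵀ) := by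
      rw [← Matrix.mul_assoc, hEB]
    have e3 : C * M * B * Eᵀ = C * M * -(A * Cᵀ) := by
      rw [Matrix.mul_assoc (C * M) B, hBE]
    have e4 : C * M * B * (Bᵀ * (Mᵀ * Cᵀ)) = C * M * ((1 - A * Aᵀ) * (Mᵀ * Cᵀ)) := by
      rw [Matrix.mul_assoc (C * M) B, ← Matrix.mul_assoc B, hBB]
    rw [e2, e3, e4]
    have r1 : C * Aᵀ * (Mᵀ * Cᵀ) = C * Cᵀ - C * (Mᵀ * Cᵀ) := by
      rw [Matrix.mul_assoc, ← Matrix.mul_assoc Aᵀ, k2, Matrix.sub_mul, Matrix.one_mul,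
        Matrix.mul_sub]
    have r2 : C * M * (A * Cᵀ) = C * Cᵀ - C * (M * Cᵀ) := by
      rw [Matrix.mul_assoc C M, ← Matrix.mul_assoc M, k1, Matrix.sub_mul, Matrix.one_mul,
        Matrix.mul_sub]
    have r3 : C * M * ((1 - A * Aᵀ) * (Mᵀ * Cᵀ))
        = C * (M * Cᵀ) + C * (Mᵀ * Cᵀ) - C * Cᵀ := by
      have : M * ((1 - A * Aᵀ) * (Mᵀ * Cᵀ)) = (M * (1 - A * Aᵀ) * Mᵀ) * Cᵀ := by
        rw [Matrix.mul_assoc (M * (1 - A * Aᵀ)) Mᵀ Cᵀ, Matrix.mul_assoc]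
      rw [Matrix.mul_assoc C M, this, k3, Matrix.sub_mul, Matrix.add_mul, Matrix.one_mul,
        Matrix.mul_sub, Matrix.mul_add]
    rw [Matrix.neg_mul, Matrix.mul_neg, r1, r2, r3, ← hCC]
    abel
  -- row sum bound for M
  have hMrow : ∀ k : Fin t, (∑ j, |M k j|) ≤ s / (s - t) := by
    intro k
    set R : ℝ := ∑ j, |M k j| with hRdef
    have hR0 : 0 ≤ R := Finset.sum_nonneg fun j _ => abs_nonneg _
    have hMeq : M = 1 - M * A := by rw [k1]; abel
    have hentry : ∀ j, |M k j| ≤ |(1 : Matrix (Fin t) (Fin t) ℝ) k j| + s⁻¹ * R := by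
      intro j
      have : M k j = (1 : Matrix (Fin t) (Fin t) ℝ) k j - (M * A) k j := by
        conv_lhs => rw [hMeq]
        rfl
      rw [this]
      refine le_trans (abs_sub _ _) ?_
      gcongr
      calc |(M * A) k j| = |∑ l, M k l * A l j| := by rfl
        _ ≤ ∑ l, |M k l * A l j| := Finset.abs_sum_le_sum_abs _ _
        _ = ∑ l, |M k l| * s⁻¹ := by
            refine Finset.sum_congr rfl fun l _ => ?_
            rw [abs_mul, hAabs l j]
        _ = s⁻¹ * R := by rw [← Finset.sum_mul, mul_comm]
    have hRle : R ≤ 1 + (t:ℝ) * (s⁻¹ * R) := by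
      calc R = ∑ j, |M k j| := rfl
        _ ≤ ∑ j, (|(1 : Matrix (Fin t) (Fin t) ℝ) k j| + s⁻¹ * R) :=
            Finset.sum_le_sum fun j _ => hentry j
        _ = (∑ j, |(1 : Matrix (Fin t) (Fin t) ℝ) k j|) + (t:ℝ) * (s⁻¹ * R) := by
            rw [Finset.sum_add_distrib, Finset.sum_const, Finset.card_univ,
              Fintype.card_fin, nsmul_eq_mul]
        _ = 1 + (t:ℝ) * (s⁻¹ * R) := by
            congr 1
            calc ∑ j, |(1 : Matrix (Fin t) (Fin t) ℝ) k j|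
                = ∑ j, (if k = j then (1:ℝ) else 0) := by
                  refine Finset.sum_congr rfl fun j _ => ?_
                  rw [Matrix.one_apply]
                  split <;> norm_num
              _ = 1 := by rw [Finset.sum_ite_eq]; simp
    rw [le_div_iff₀ hstpos]
    have hmul := mul_le_mul_of_nonneg_right hRle hsnn
    have hsi : s⁻¹ * s = 1 := inv_mul_cancel₀ hsne
    have hmul2 : R * s ≤ s + (t:ℝ) * R := by
      calc R * s ≤ (1 + (t:ℝ) * (s⁻¹ * R)) * s := hmul
        _ = s + (t:ℝ) * R * (s⁻¹ * s) := by ring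
        _ = s + (t:ℝ) * R := by rw [hsi, mul_one]
    nlinarith [hmul2]
  -- bound on correction term
  have hWMV : ∀ i j, |(W * M * V) i j| ≤ (t:ℝ) * (s / (s - t)) := by
    intro i j
    calc |(W * M * V) i j| = |∑ k, (W * M) i k * V k j| := by rfl
      _ ≤ ∑ k, |(W * M) i k * V k j| := Finset.abs_sum_le_sum_abs _ _
      _ = ∑ k, |(W * M) i k| := by
          refine Finset.sum_congr rfl fun k _ => ?_
          rw [abs_mul, hV k j, mul_one]
      _ ≤ ∑ k, ∑ l, |M l k| := by
          refine Finset.sum_le_sum fun k _ => ?_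
          calc |(W * M) i k| = |∑ l, W i l * M l k| := by rfl
            _ ≤ ∑ l, |W i l * M l k| := Finset.abs_sum_le_sum_abs _ _
            _ = ∑ l, |M l k| := by
                refine Finset.sum_congr rfl fun l _ => ?_
                rw [abs_mul, hW i l, one_mul]
      _ = ∑ l, ∑ k, |M l k| := Finset.sum_comm
      _ ≤ ∑ l : Fin t, s / (s - t) := Finset.sum_le_sum fun l _ => hMrow l
      _ = (t:ℝ) * (s / (s - t)) := by
          rw [Finset.sum_const, Finset.card_univ, Fintype.card_fin, nsmul_eq_mul]
  -- final assembly
  have heq : (4 * (n:ℝ))⁻¹ • (W * M * V) = C * M * B := by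
    rw [hCdef, hBdef, Matrix.smul_mul, Matrix.smul_mul, Matrix.mul_smul, smul_smul,
      ← hs2, mul_inv]
  have hfact1 : (E - (4 * (n:ℝ))⁻¹ • (W * M * V)) *
      (E - (4 * (n:ℝ))⁻¹ • (W * M * V))ᵀ = 1 := by
    rw [heq]; exact horth
  have hfact2 : ∀ i j, s⁻¹ * (1 - (t:ℝ) / (s - t))
        ≤ |(E - (4 * (n:ℝ))⁻¹ • (W * M * V)) i j| ∧
      |(E - (4 * (n:ℝ))⁻¹ • (W * M * V)) i j| ≤ s⁻¹ * (1 + (t:ℝ) / (s - t)) := by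
    intro i j
    have happ : (E - (4 * (n:ℝ))⁻¹ • (W * M * V)) i j
        = s⁻¹ * D i j - (4 * (n:ℝ))⁻¹ * (W * M * V) i j := by
      rw [Matrix.sub_apply, hEdef, Matrix.smul_apply, Matrix.smul_apply, smul_eq_mul,
        smul_eq_mul]
    have habs1 : |s⁻¹ * D i j| = s⁻¹ := by
      rw [abs_mul, hD i j, mul_one, abs_of_nonneg (inv_nonneg.mpr hsnn)]
    have habs2 : |(4 * (n:ℝ))⁻¹ * (W * M * V) i j| ≤ s⁻¹ * ((t:ℝ) / (s - t)) := by
      rw [abs_mul, ← hs2, mul_inv, abs_of_nonneg (by positivity : (0:ℝ) ≤ s⁻¹ * s⁻¹)]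
      calc s⁻¹ * s⁻¹ * |(W * M * V) i j| ≤ s⁻¹ * s⁻¹ * ((t:ℝ) * (s / (s - t))) := by
            gcongr; exact hWMV i j
        _ = s⁻¹ * ((t:ℝ) / (s - t)) := by
            field_simp
    constructor
    · rw [happ]
      have h1 : |s⁻¹ * D i j| - |(4 * (n:ℝ))⁻¹ * (W * M * V) i j|
          ≤ |s⁻¹ * D i j - (4 * (n:ℝ))⁻¹ * (W * M * V) i j| :=
        abs_sub_abs_le_abs_sub _ _
      rw [habs1] at h1
      have h2 : s⁻¹ * (1 - (t:ℝ) / (s - t))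
          ≤ s⁻¹ - |(4 * (n:ℝ))⁻¹ * (W * M * V) i j| := by
        rw [mul_sub, mul_one]
        linarith [habs2]
      linarith
    · rw [happ]
      refine le_trans (abs_sub _ _) ?_
      rw [habs1, mul_add, mul_one]
      linarith [habs2]
  exact ⟨hunit, hfact1, hfact2⟩
end

section
/- Let n, t be naturals with t ≥ 1 and t² < 4n. Let H be a real Hadamard matrix of order 4n written in block form H = [[U, V], [W, D]] with U of size t × t, V of size t × (4n−t), W of size (4n−t) × t, and D of size (4n−t) × (4n−t). Then I − (1/√(4n))·U is invertible, the matrix Y₂ = (1/√(4n))·D + (1/(4n))·W·(I − (1/√(4n))·U)⁻¹·V is an orthogonal matrix of order 4n − t, and every entry of Y₂ satisfies (1/√(4n))·(1 − t/(√(4n) − t)) ≤ |(Y₂)_{ij}| ≤ (1/√(4n))·(1 + t/(√(4n) − t)). -/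
open Matrix

attribute [local instance] Matrix.linftyOpNormedRing Matrix.linftyOpNormedAlgebra

lemma aux_mat {ι κ : Type*} [Fintype ι] [Fintype κ] [DecidableEq ι] [DecidableEq κ]
    (a a' m nn : Matrix ι ι ℝ) (b : Matrix ι κ ℝ) (b' : Matrix κ ι ℝ)
    (c : Matrix κ ι ℝ) (c' : Matrix ι κ ℝ) (e e' : Matrix κ κ ℝ)
    (h1 : b*b' = 1 - a*a') (h2 : b*e' = -(a*c')) (h3 : e*b' = -(c*a'))
    (h4 : c*c' + e*e' = 1) (h5 : m*(1-a) = 1) (h6 : (1-a')*nn = 1) :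
    (e + c*m*b)*(e' + b'*(nn*c')) = 1 := by
  have h6' : a'*nn = nn - 1 := by
    have h := h6
    rw [sub_mul, one_mul] at h
    rw [← h]; abel
  have h5' : m - m*a = 1 := by
    have h := h5
    rwa [mul_sub, mul_one] at h
  have key : m*(b*b')*nn = nn + m*a := by
    rw [h1]
    have expand : m*((1:Matrix ι ι ℝ) - a*a')*nn = m*(1-a)*nn + m*(a*((1-a')*nn)) := by
      noncomm_ring
    rw [expand, h5, h6, one_mul, mul_one]
  have T2 : e*(b'*(nn*c')) = c*c' - c*(nn*c') := by
    rw [← Matrix.mul_assoc e b' (nn*c'), h3, Matrix.neg_mul,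
        Matrix.mul_assoc c a' (nn*c'), ← Matrix.mul_assoc a' nn c', h6',
        Matrix.sub_mul, Matrix.one_mul, Matrix.mul_sub]
    abel
  have T3 : (c*m*b)*e' = -(c*((m*a)*c')) := by
    rw [Matrix.mul_assoc (c*m) b e', h2, Matrix.mul_neg,
        Matrix.mul_assoc c m (a*c'), ← Matrix.mul_assoc m a c']
  have T4 : (c*m*b)*(b'*(nn*c')) = c*(nn*c') + c*((m*a)*c') := by
    rw [Matrix.mul_assoc (c*m) b (b'*(nn*c')), ← Matrix.mul_assoc b b' (nn*c'),
        ← Matrix.mul_assoc (b*b') nn c', Matrix.mul_assoc c m (b*b'*nn*c'),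
        ← Matrix.mul_assoc m (b*b'*nn) c', ← Matrix.mul_assoc m (b*b') nn,
        key, Matrix.add_mul, Matrix.mul_add]
  calc (e + c*m*b)*(e' + b'*(nn*c'))
      = e*e' + e*(b'*(nn*c')) + ((c*m*b)*e' + (c*m*b)*(b'*(nn*c'))) := by
        rw [Matrix.add_mul, Matrix.mul_add, Matrix.mul_add]
    _ = e*e' + (c*c' - c*(nn*c')) + (-(c*((m*a)*c')) + (c*(nn*c') + c*((m*a)*c'))) := by
        rw [T2, T3, T4]
    _ = c*c' + e*e' := by abel
    _ = 1 := h4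

theorem stmt_7 (n t : ℕ) (ht : 1 ≤ t) (htn : t * t < 4 * n)
    (U : Matrix (Fin t) (Fin t) ℝ) (V : Matrix (Fin t) (Fin (4 * n - t)) ℝ)
    (W : Matrix (Fin (4 * n - t)) (Fin t) ℝ)
    (D : Matrix (Fin (4 * n - t)) (Fin (4 * n - t)) ℝ)
    (hent : ∀ i j, Matrix.fromBlocks U V W D i j = 1 ∨ Matrix.fromBlocks U V W D i j = -1)
    (hH : Matrix.fromBlocks U V W D * (Matrix.fromBlocks U V W D)ᵀ
            = (4 * (n : ℝ)) • 1) :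
    IsUnit (1 - (Real.sqrt (4 * (n : ℝ)))⁻¹ • U) ∧
    (let Y₂ := (Real.sqrt (4 * (n : ℝ)))⁻¹ • D +
        (4 * (n : ℝ))⁻¹ • (W * (1 - (Real.sqrt (4 * (n : ℝ)))⁻¹ • U)⁻¹ * V);
      Y₂ * Y₂ᵀ = 1 ∧
      ∀ i j, (Real.sqrt (4 * (n : ℝ)))⁻¹ *
               (1 - (t : ℝ) / (Real.sqrt (4 * (n : ℝ)) - (t : ℝ))) ≤ |Y₂ i j| ∧
             |Y₂ i j| ≤ (Real.sqrt (4 * (n : ℝ)))⁻¹ *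
               (1 + (t : ℝ) / (Real.sqrt (4 * (n : ℝ)) - (t : ℝ)))) := by
  haveI : Nonempty (Fin t) := ⟨⟨0, ht⟩⟩
  set s : ℝ := Real.sqrt (4 * (n : ℝ)) with hs
  have hn0 : (0:ℝ) ≤ 4 * n := by positivity
  have hss : s * s = 4 * n := Real.mul_self_sqrt hn0
  have hts : (t:ℝ) < s := by
    rw [hs, show (4 * (n:ℝ)) = ((4 * n : ℕ) : ℝ) by push_cast; ring]
    refine (Real.lt_sqrt (Nat.cast_nonneg t)).mpr ?_
    rw [sq]
    exact_mod_cast htn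
  have ht1 : (1:ℝ) ≤ (t:ℝ) := by exact_mod_cast ht
  have hs0 : 0 < s := lt_of_lt_of_le (by linarith) hts.le
  have hst0 : 0 < s - t := by linarith
  -- entry facts
  have hUe : ∀ i j, |U i j| = 1 := by
    intro i j
    rcases hent (Sum.inl i) (Sum.inl j) with h | h <;>
      simp only [fromBlocks_apply₁₁] at h <;> simp [h]
  have hVe : ∀ i j, |V i j| = 1 := by
    intro i j
    rcases hent (Sum.inl i) (Sum.inr j) with h | h <;>
      simp only [fromBlocks_apply₁₂] at h <;> simp [h]
  have hWe : ∀ i j, |W i j| = 1 := by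
    intro i j
    rcases hent (Sum.inr i) (Sum.inl j) with h | h <;>
      simp only [fromBlocks_apply₂₁] at h <;> simp [h]
  have hDe : ∀ i j, |D i j| = 1 := by
    intro i j
    rcases hent (Sum.inr i) (Sum.inr j) with h | h <;>
      simp only [fromBlocks_apply₂₂] at h <;> simp [h]
  set A : Matrix (Fin t) (Fin t) ℝ := s⁻¹ • U with hA
  set B : Matrix (Fin t) (Fin (4*n-t)) ℝ := s⁻¹ • V with hB
  set C : Matrix (Fin (4*n-t)) (Fin t) ℝ := s⁻¹ • W with hC
  set E : Matrix (Fin (4*n-t)) (Fin (4*n-t)) ℝ := s⁻¹ • D with hE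
  have hsinv : (0:ℝ) < s⁻¹ := inv_pos.mpr hs0
  have hCe : ∀ i p, |C i p| = s⁻¹ := by
    intro i p
    simp [hC, abs_mul, hWe, abs_of_pos hsinv]
  have hBe : ∀ q j, |B q j| = s⁻¹ := by
    intro q j
    simp [hB, abs_mul, hVe, abs_of_pos hsinv]
  have hEe : ∀ i j, |E i j| = s⁻¹ := by
    intro i j
    simp [hE, abs_mul, hDe, abs_of_pos hsinv]
  -- norm of A
  have hAnorm : ‖A‖ = (t:ℝ) * s⁻¹ := by
    rw [Matrix.linfty_opNorm_def]
    have hrow : ∀ i : Fin t, (∑ j, ‖A i j‖₊) = (t : NNReal) * ‖s⁻¹‖₊ := by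
      intro i
      have hone : ∀ j : Fin t, ‖A i j‖₊ = ‖s⁻¹‖₊ := by
        intro j
        ext
        simp [hA, Real.norm_eq_abs, abs_mul, hUe, abs_of_pos hsinv]
      simp [hone, Finset.sum_const, mul_comm]
    rw [show (Finset.univ.sup fun i : Fin t => ∑ j, ‖A i j‖₊) = (t : NNReal) * ‖s⁻¹‖₊ by
      rw [Finset.sup_congr rfl (fun i _ => hrow i)]
      exact Finset.sup_const Finset.univ_nonempty _]
    push_cast
    rw [Real.norm_eq_abs, abs_of_pos hsinv]
  have hAlt : ‖A‖ < 1 := by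
    rw [hAnorm, ← div_eq_mul_inv]
    exact (div_lt_one hs0).mpr hts
  -- invertibility
  have hUnit : IsUnit (1 - A) := isUnit_one_sub_of_norm_lt_one hAlt
  have hdet : IsUnit (1 - A).det := (Matrix.isUnit_iff_isUnit_det _).mp hUnit
  set M : Matrix (Fin t) (Fin t) ℝ := (1 - A)⁻¹ with hM
  have hM1 : (1 - A) * M = 1 := Matrix.mul_nonsing_inv _ hdet
  have hM2 : M * (1 - A) = 1 := Matrix.nonsing_inv_mul _ hdet
  have hN1 : (1 - Aᵀ) * Mᵀ = 1 := by
    have h := congrArg Matrix.transpose hM2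
    rwa [Matrix.transpose_mul, Matrix.transpose_sub, Matrix.transpose_one] at h
  -- norm bound for M
  have hMnorm : ‖M‖ ≤ (1 - ‖A‖)⁻¹ := by
    have hMeq : M = 1 + M * A := by rw [← hM2]; noncomm_ring
    have h1 : ‖M‖ ≤ 1 + ‖M‖ * ‖A‖ := by
      calc ‖M‖ = ‖1 + M * A‖ := by rw [← hMeq]
        _ ≤ ‖(1 : Matrix (Fin t) (Fin t) ℝ)‖ + ‖M * A‖ := norm_add_le _ _
        _ ≤ 1 + ‖M‖ * ‖A‖ := by
            rw [norm_one]
            exact add_le_add le_rfl (norm_mul_le M A)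
    have hpos : 0 < 1 - ‖A‖ := by linarith
    rw [inv_eq_one_div, le_div_iff₀ hpos]
    nlinarith [norm_nonneg M]
  -- row sums of M
  have hrowM : ∀ p, (∑ q, |M p q|) ≤ ‖M‖ := by
    intro p
    have h := Finset.le_sup (f := fun i => ∑ j, ‖M i j‖₊) (Finset.mem_univ p)
    rw [Matrix.linfty_opNorm_def]
    calc (∑ q, |M p q|) = ((∑ q, ‖M p q‖₊ : NNReal) : ℝ) := by
          simp [NNReal.coe_sum, Real.norm_eq_abs]
      _ ≤ _ := NNReal.coe_le_coe.mpr h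
  -- entrywise bound on C*M*B
  have hXbound : ∀ i j, |(C * M * B) i j| ≤ s⁻¹ * ((t:ℝ) / (s - t)) := by
    intro i j
    have step1 : |(C * M * B) i j| ≤ s⁻¹ * s⁻¹ * ((t:ℝ) * ‖M‖) := by
      rw [Matrix.mul_apply]
      calc |∑ q, (C * M) i q * B q j| ≤ ∑ q, |(C * M) i q * B q j| :=
            Finset.abs_sum_le_sum_abs _ _
        _ = ∑ q, |(C * M) i q| * s⁻¹ := by
            refine Finset.sum_congr rfl fun q _ => ?_
            rw [abs_mul, hBe]
        _ ≤ ∑ q : Fin t, (∑ p, s⁻¹ * |M p q|) * s⁻¹ := by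
            refine Finset.sum_le_sum fun q _ => ?_
            refine mul_le_mul_of_nonneg_right ?_ (le_of_lt hsinv)
            rw [Matrix.mul_apply]
            calc |∑ p, C i p * M p q| ≤ ∑ p, |C i p * M p q| :=
                  Finset.abs_sum_le_sum_abs _ _
              _ = ∑ p, s⁻¹ * |M p q| := by
                  refine Finset.sum_congr rfl fun p _ => ?_
                  rw [abs_mul, hCe]
        _ = ∑ q : Fin t, s⁻¹ * s⁻¹ * ∑ p, |M p q| := by
            refine Finset.sum_congr rfl fun q _ => ?_
            rw [← Finset.mul_sum]
            ring
        _ = s⁻¹ * s⁻¹ * ∑ p, ∑ q, |M p q| := by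
            rw [← Finset.mul_sum, Finset.sum_comm]
        _ ≤ s⁻¹ * s⁻¹ * ((t:ℝ) * ‖M‖) := by
            refine mul_le_mul_of_nonneg_left ?_ (by positivity)
            calc (∑ p : Fin t, ∑ q, |M p q|) ≤ ∑ _p : Fin t, ‖M‖ :=
                  Finset.sum_le_sum fun p _ => hrowM p
              _ = (t:ℝ) * ‖M‖ := by simp [Finset.sum_const, mul_comm]
    have hMn2 : ‖M‖ ≤ (1 - (t:ℝ) * s⁻¹)⁻¹ := by rw [← hAnorm]; exact hMnorm
    have hMnn : 0 ≤ ‖M‖ := norm_nonneg M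
    calc |(C * M * B) i j| ≤ s⁻¹ * s⁻¹ * ((t:ℝ) * ‖M‖) := step1
      _ ≤ s⁻¹ * s⁻¹ * ((t:ℝ) * (1 - (t:ℝ) * s⁻¹)⁻¹) := by
          refine mul_le_mul_of_nonneg_left ?_ (by positivity)
          exact mul_le_mul_of_nonneg_left hMn2 (by positivity)
      _ = s⁻¹ * ((t:ℝ) / (s - t)) := by
          rw [show (1 - (t:ℝ) * s⁻¹) = (s - t) * s⁻¹ by field_simp]
          rw [mul_inv]
          field_simp
  -- orthogonality of the big block matrix
  have hYfb : fromBlocks A B C E = s⁻¹ • fromBlocks U V W D := by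
    rw [hA, hB, hC, hE, Matrix.fromBlocks_smul]
  have hY : fromBlocks A B C E * (fromBlocks A B C E)ᵀ = 1 := by
    rw [hYfb, Matrix.transpose_smul, Matrix.smul_mul, Matrix.mul_smul, hH, smul_smul, smul_smul]
    rw [show s⁻¹ * s⁻¹ * (4 * (n:ℝ)) = 1 by rw [← hss]; field_simp]
    rw [one_smul]
  have hblocks : fromBlocks (A*Aᵀ + B*Bᵀ) (A*Cᵀ + B*Eᵀ) (C*Aᵀ + E*Bᵀ) (C*Cᵀ + E*Eᵀ)
      = fromBlocks 1 0 0 1 := by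
    calc fromBlocks (A*Aᵀ + B*Bᵀ) (A*Cᵀ + B*Eᵀ) (C*Aᵀ + E*Bᵀ) (C*Cᵀ + E*Eᵀ)
        = fromBlocks A B C E * (fromBlocks A B C E)ᵀ := by
          rw [Matrix.fromBlocks_transpose, Matrix.fromBlocks_multiply]
      _ = 1 := hY
      _ = fromBlocks 1 0 0 1 := Matrix.fromBlocks_one.symm
  have h11 : A*Aᵀ + B*Bᵀ = 1 := by
    have h := congrArg Matrix.toBlocks₁₁ hblocks
    rwa [Matrix.toBlocks_fromBlocks₁₁, Matrix.toBlocks_fromBlocks₁₁] at h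
  have h12 : A*Cᵀ + B*Eᵀ = 0 := by
    have h := congrArg Matrix.toBlocks₁₂ hblocks
    rwa [Matrix.toBlocks_fromBlocks₁₂, Matrix.toBlocks_fromBlocks₁₂] at h
  have h21 : C*Aᵀ + E*Bᵀ = 0 := by
    have h := congrArg Matrix.toBlocks₂₁ hblocks
    rwa [Matrix.toBlocks_fromBlocks₂₁, Matrix.toBlocks_fromBlocks₂₁] at h
  have h22 : C*Cᵀ + E*Eᵀ = 1 := by
    have h := congrArg Matrix.toBlocks₂₂ hblocks
    rwa [Matrix.toBlocks_fromBlocks₂₂, Matrix.toBlocks_fromBlocks₂₂] at h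
  have h1' : B*Bᵀ = 1 - A*Aᵀ := eq_sub_of_add_eq' h11
  have h2' : B*Eᵀ = -(A*Cᵀ) := eq_neg_of_add_eq_zero_right h12
  have h3' : E*Bᵀ = -(C*Aᵀ) := eq_neg_of_add_eq_zero_right h21
  have horth : (E + C*M*B) * (Eᵀ + Bᵀ*(Mᵀ*Cᵀ)) = 1 :=
    aux_mat A Aᵀ M Mᵀ B Bᵀ C Cᵀ E Eᵀ h1' h2' h3' h22 hM2 hN1
  have hCMB : (4*(n:ℝ))⁻¹ • (W * M * V) = C * M * B := by
    rw [hC, hB, Matrix.smul_mul, Matrix.smul_mul, Matrix.mul_smul, smul_smul]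
    congr 1
    rw [← hss, mul_inv]
  refine ⟨hUnit, ?_⟩
  dsimp only
  rw [hCMB]
  constructor
  · rw [Matrix.transpose_add, Matrix.transpose_mul, Matrix.transpose_mul]
    exact horth
  · intro i j
    rw [Matrix.add_apply]
    have hXb := hXbound i j
    have hEb := hEe i j
    have habs : |E i j| - |(C*M*B) i j| ≤ |E i j + (C*M*B) i j| := by
      have h := abs_sub_abs_le_abs_sub (E i j) (-((C*M*B) i j))
      rw [abs_neg, sub_neg_eq_add] at h
      exact h
    constructor
    · calc s⁻¹ * (1 - (t:ℝ) / (s - t)) = s⁻¹ - s⁻¹ * ((t:ℝ) / (s - t)) := by ring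
        _ ≤ |E i j| - |(C*M*B) i j| := by rw [hEb]; linarith
        _ ≤ |E i j + (C*M*B) i j| := habs
    · calc |E i j + (C*M*B) i j| ≤ |E i j| + |(C*M*B) i j| := abs_add_le _ _
        _ ≤ s⁻¹ + s⁻¹ * ((t:ℝ) / (s - t)) := by rw [hEb]; linarith
        _ = s⁻¹ * (1 + (t:ℝ) / (s - t)) := by ring
end

section
/- Let n ≥ 1 be a natural and let H be a real Hadamard matrix of order 4n whose (1,1) entry equals 1, written in block form H = [[1, v], [w, D]] where v is a 1 × (4n−1) row vector, w is a (4n−1) × 1 column vector, and D is (4n−1) × (4n−1). Then the matrix Y = (1/√(4n)) · (D − (1/(√(4n) + 1)) · w·v) is an orthogonal matrix of order 4n − 1, and for every entry of Y, |Y_{ij}| equals either (1/√(4n))·(1 + 1/(√(4n)+1)) or (1/√(4n))·(1 − 1/(√(4n)+1)). -/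
open Matrix

theorem stmt_8 (n : ℕ) (hn : 1 ≤ n)
    (v : Matrix (Fin 1) (Fin (4 * n - 1)) ℝ) (w : Matrix (Fin (4 * n - 1)) (Fin 1) ℝ)
    (D : Matrix (Fin (4 * n - 1)) (Fin (4 * n - 1)) ℝ)
    (hent : ∀ i j, Matrix.fromBlocks 1 v w D i j = 1 ∨ Matrix.fromBlocks 1 v w D i j = -1)
    (hH : Matrix.fromBlocks 1 v w D * (Matrix.fromBlocks 1 v w D)ᵀ
            = (4 * (n : ℝ)) • 1) :
    (let Y := (Real.sqrt (4 * (n : ℝ)))⁻¹ •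
        (D - (Real.sqrt (4 * (n : ℝ)) + 1)⁻¹ • (w * v));
      Y * Yᵀ = 1 ∧
      ∀ i j,
        |Y i j| = (Real.sqrt (4 * (n : ℝ)))⁻¹ * (1 + 1 / (Real.sqrt (4 * (n : ℝ)) + 1)) ∨
        |Y i j| = (Real.sqrt (4 * (n : ℝ)))⁻¹ * (1 - 1 / (Real.sqrt (4 * (n : ℝ)) + 1))) := by
  intro Y
  set s := Real.sqrt (4 * (n : ℝ)) with hsdef
  have h4n : (0:ℝ) < 4 * n := by positivity
  have hs2 : s * s = 4 * n := Real.mul_self_sqrt h4n.le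
  have hs1 : 1 ≤ s := by
    have h1 : (1:ℝ) ≤ 4 * n := by
      have : (1:ℝ) ≤ (n:ℝ) := by exact_mod_cast hn
      nlinarith
    nlinarith [Real.sqrt_nonneg (4 * (n:ℝ))]
  have hs0 : 0 < s := lt_of_lt_of_le one_pos hs1
  have hsp1 : (0:ℝ) < s + 1 := by linarith
  set c : ℝ := (s + 1)⁻¹ with hcdef
  have hc0 : 0 < c := inv_pos.mpr hsp1
  have hc1 : c ≤ 1 := by
    rw [hcdef, inv_le_one_iff₀]; right; linarith
  -- block equations
  have hH' := hH
  rw [fromBlocks_transpose, fromBlocks_multiply,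
    ← fromBlocks_one (l := Fin 1) (m := Fin (4*n-1)) (α := ℝ),
    fromBlocks_smul, fromBlocks_inj] at hH'
  obtain ⟨h11, h12, h21, h22⟩ := hH'
  rw [Matrix.transpose_one, Matrix.one_mul] at h11
  rw [Matrix.one_mul, smul_zero] at h12
  rw [Matrix.transpose_one, Matrix.mul_one, smul_zero] at h21
  have hvv : v * vᵀ = (4 * (n:ℝ)) • 1 - 1 := eq_sub_of_add_eq' h11
  have hDv : D * vᵀ = -w := eq_neg_of_add_eq_zero_right h21
  have hvD : v * Dᵀ = -wᵀ := eq_neg_of_add_eq_zero_right h12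
  have hDD : D * Dᵀ = (4 * (n:ℝ)) • 1 - w * wᵀ := eq_sub_of_add_eq' h22
  constructor
  · -- orthogonality
    have hYt : Yᵀ = s⁻¹ • (Dᵀ - c • (vᵀ * wᵀ)) := by
      show (s⁻¹ • (D - c • (w * v)))ᵀ = _
      rw [Matrix.transpose_smul, Matrix.transpose_sub, Matrix.transpose_smul,
        Matrix.transpose_mul]
    have key : (D - c • (w * v)) * (Dᵀ - c • (vᵀ * wᵀ))
        = D * Dᵀ - c • (D * vᵀ * wᵀ) - c • (w * (v * Dᵀ)) + (c * c) • (w * (v * vᵀ) * wᵀ) := by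
      simp only [Matrix.sub_mul, Matrix.mul_sub, Matrix.smul_mul, Matrix.mul_smul,
        Matrix.mul_assoc, smul_smul]
      module
    have hY : Y * Yᵀ = (s⁻¹ * s⁻¹) • ((D - c • (w * v)) * (Dᵀ - c • (vᵀ * wᵀ))) := by
      rw [hYt]
      show (s⁻¹ • (D - c • (w * v))) * (s⁻¹ • (Dᵀ - c • (vᵀ * wᵀ))) = _
      rw [Matrix.smul_mul, Matrix.mul_smul, smul_smul]
    have hwvw : w * ((4 * (n:ℝ)) • 1 - 1 : Matrix (Fin 1) (Fin 1) ℝ) * wᵀ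
        = (4 * (n:ℝ)) • (w * wᵀ) - w * wᵀ := by
      rw [Matrix.mul_sub, Matrix.sub_mul, Matrix.mul_smul, Matrix.mul_one, Matrix.smul_mul]
    rw [hY, key, hDD, hDv, hvD, hvv, hwvw]
    simp only [Matrix.neg_mul, Matrix.mul_neg, smul_neg]
    have hne : s ≠ 0 := hs0.ne'
    have hne1 : s + 1 ≠ 0 := hsp1.ne'
    match_scalars
    · rw [mul_one, ← hs2]
      field_simp
    · rw [hcdef, ← hs2]
      field_simp
      ring
  · -- entries
    intro i j
    have hD := hent (Sum.inr i) (Sum.inr j)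
    have hw := hent (Sum.inr i) (Sum.inl 0)
    have hv := hent (Sum.inl 0) (Sum.inr j)
    simp only [Matrix.fromBlocks_apply₂₂, Matrix.fromBlocks_apply₂₁,
      Matrix.fromBlocks_apply₁₂] at hD hw hv
    have hYij : Y i j = s⁻¹ * (D i j - c * (w i 0 * v 0 j)) := by
      show (s⁻¹ • (D - c • (w * v))) i j = _
      simp only [Matrix.smul_apply, Matrix.sub_apply, Matrix.mul_apply,
        Fin.sum_univ_one, smul_eq_mul]
    have hc' : 1 / (s + 1) = c := (one_div _).trans hcdef.symm
    have hi : (0:ℝ) < s⁻¹ := inv_pos.mpr hs0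
    have h1 : (0:ℝ) ≤ s⁻¹ * (1 - c) := mul_nonneg hi.le (by linarith)
    have h2 : (0:ℝ) ≤ s⁻¹ * (1 + c) := mul_nonneg hi.le (by linarith)
    rw [hYij, hc']
    have A1 : |s⁻¹ * (1 - c)| = s⁻¹ * (1 - c) := abs_of_nonneg h1
    have A2 : |s⁻¹ * (1 + c)| = s⁻¹ * (1 + c) := abs_of_nonneg h2
    have A3 : |s⁻¹ * (-1 - c)| = s⁻¹ * (1 + c) := by
      rw [abs_of_nonpos (by nlinarith)]; ring
    have A4 : |s⁻¹ * (-1 + c)| = s⁻¹ * (1 - c) := by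
      rw [abs_of_nonpos (by nlinarith)]; ring
    rcases hD with hD | hD <;> rcases hw with hw | hw <;> rcases hv with hv | hv <;>
      rw [hD, hw, hv]
    · right; rw [(by ring : s⁻¹ * ((1:ℝ) - c * (1 * 1)) = s⁻¹ * (1 - c)), A1]
    · left; rw [(by ring : s⁻¹ * ((1:ℝ) - c * (1 * -1)) = s⁻¹ * (1 + c)), A2]
    · left; rw [(by ring : s⁻¹ * ((1:ℝ) - c * (-1 * 1)) = s⁻¹ * (1 + c)), A2]
    · right; rw [(by ring : s⁻¹ * ((1:ℝ) - c * (-1 * -1)) = s⁻¹ * (1 - c)), A1]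
    · left; rw [(by ring : s⁻¹ * ((-1:ℝ) - c * (1 * 1)) = s⁻¹ * (-1 - c)), A3]
    · right; rw [(by ring : s⁻¹ * ((-1:ℝ) - c * (1 * -1)) = s⁻¹ * (-1 + c)), A4]
    · right; rw [(by ring : s⁻¹ * ((-1:ℝ) - c * (-1 * 1)) = s⁻¹ * (-1 + c)), A4]
    · left; rw [(by ring : s⁻¹ * ((-1:ℝ) - c * (-1 * -1)) = s⁻¹ * (-1 - c)), A3]
end

section
/- Let n ≥ 1 be a natural and let H be a real Hadamard matrix of order 4n whose (1,1) entry equals 1, written in block form H = [[1, v], [w, D]] where v is a 1 × (4n−1) row vector, w is a (4n−1) × 1 column vector, and D is (4n−1) × (4n−1). Then the matrix Y = (1/√(4n)) · (D + (1/(√(4n) − 1)) · w·v) is an orthogonal matrix of order 4n − 1, and for every entry of Y, |Y_{ij}| equals either (1/√(4n))·(1 + 1/(√(4n)−1)) or (1/√(4n))·(1 − 1/(√(4n)−1)). -/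
open Matrix

theorem stmt_9 (n : ℕ) (hn : 1 ≤ n)
    (v : Matrix (Fin 1) (Fin (4 * n - 1)) ℝ) (w : Matrix (Fin (4 * n - 1)) (Fin 1) ℝ)
    (D : Matrix (Fin (4 * n - 1)) (Fin (4 * n - 1)) ℝ)
    (hent : ∀ i j, Matrix.fromBlocks 1 v w D i j = 1 ∨ Matrix.fromBlocks 1 v w D i j = -1)
    (hH : Matrix.fromBlocks 1 v w D * (Matrix.fromBlocks 1 v w D)ᵀ
            = (4 * (n : ℝ)) • 1) :
    (let Y := (Real.sqrt (4 * (n : ℝ)))⁻¹ •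
        (D + (Real.sqrt (4 * (n : ℝ)) - 1)⁻¹ • (w * v));
      Y * Yᵀ = 1 ∧
      ∀ i j,
        |Y i j| = (Real.sqrt (4 * (n : ℝ)))⁻¹ * (1 + 1 / (Real.sqrt (4 * (n : ℝ)) - 1)) ∨
        |Y i j| = (Real.sqrt (4 * (n : ℝ)))⁻¹ * (1 - 1 / (Real.sqrt (4 * (n : ℝ)) - 1))) := by
  intro Y
  have hn1 : (1:ℝ) ≤ (n:ℝ) := by exact_mod_cast hn
  set s := Real.sqrt (4 * (n : ℝ)) with hs_def
  have ha : (0:ℝ) ≤ 4 * (n:ℝ) := by linarith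
  have hss : s * s = 4 * (n:ℝ) := Real.mul_self_sqrt ha
  have hsnn : 0 ≤ s := Real.sqrt_nonneg _
  have hs2 : 2 ≤ s := by nlinarith
  have hs0 : 0 < s := by linarith
  have hs1 : (0:ℝ) < s - 1 := by linarith
  have hs1' : s - 1 ≠ 0 := ne_of_gt hs1
  -- extract block equations
  rw [Matrix.fromBlocks_transpose, Matrix.fromBlocks_multiply,
    show ((1 : Matrix (Fin 1 ⊕ Fin (4*n-1)) (Fin 1 ⊕ Fin (4*n-1)) ℝ)) =
      Matrix.fromBlocks 1 0 0 1 from Matrix.fromBlocks_one.symm,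
    Matrix.fromBlocks_smul, Matrix.fromBlocks_inj] at hH
  obtain ⟨h11, h12, h21, h22⟩ := hH
  have hvv : v * vᵀ = (4 * (n:ℝ)) • 1 - 1 := by
    have : (1 : Matrix (Fin 1) (Fin 1) ℝ) * 1ᵀ = 1 := by simp
    rw [this] at h11
    linear_combination (norm := abel) h11
  have hvD : v * Dᵀ = -wᵀ := by
    have : (1 : Matrix (Fin 1) (Fin 1) ℝ) * wᵀ = wᵀ := by simp
    rw [this] at h12
    simp only [smul_zero] at h12
    linear_combination (norm := abel) h12
  have hDv : D * vᵀ = -w := by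
    have : w * (1 : Matrix (Fin 1) (Fin 1) ℝ)ᵀ = w := by simp
    rw [this] at h21
    simp only [smul_zero] at h21
    linear_combination (norm := abel) h21
  have hDD : D * Dᵀ = (4 * (n:ℝ)) • 1 - w * wᵀ := by
    linear_combination (norm := abel) h22
  constructor
  · -- orthogonality
    show ((s⁻¹) • (D + (s-1)⁻¹ • (w * v))) * ((s⁻¹) • (D + (s-1)⁻¹ • (w * v)))ᵀ = 1
    rw [Matrix.transpose_smul, Matrix.transpose_add, Matrix.transpose_smul,
      Matrix.transpose_mul]
    rw [Matrix.smul_mul, Matrix.mul_smul, Matrix.add_mul, Matrix.mul_add, Matrix.mul_add]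
    simp only [Matrix.smul_mul, Matrix.mul_smul]
    have e1 : D * (vᵀ * wᵀ) = -(w * wᵀ) := by
      rw [← Matrix.mul_assoc, hDv, Matrix.neg_mul]
    have e2 : w * v * Dᵀ = -(w * wᵀ) := by
      rw [Matrix.mul_assoc, hvD, Matrix.mul_neg]
    have e3 : w * v * (vᵀ * wᵀ) = (4 * (n:ℝ)) • (w * wᵀ) - w * wᵀ := by
      rw [Matrix.mul_assoc, ← Matrix.mul_assoc v, hvv]
      rw [Matrix.sub_mul, Matrix.mul_sub, Matrix.smul_mul, Matrix.mul_smul]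
      simp
    rw [hDD, e1, e2, e3]
    rw [← hss]
    match_scalars <;> field_simp <;> ring
  · intro i j
    have hD := hent (Sum.inr i) (Sum.inr j)
    have hw := hent (Sum.inr i) (Sum.inl 0)
    have hv := hent (Sum.inl 0) (Sum.inr j)
    simp only [Matrix.fromBlocks_apply₂₂, Matrix.fromBlocks_apply₂₁,
      Matrix.fromBlocks_apply₁₂] at hD hw hv
    have hY : Y i j = s⁻¹ * (D i j + (s-1)⁻¹ * (w i 0 * v 0 j)) := by
      show (s⁻¹ • (D + (s-1)⁻¹ • (w * v))) i j = _
      simp [Matrix.smul_apply, Matrix.add_apply, Matrix.mul_apply, Fin.sum_univ_one]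
    have hcle : (s-1)⁻¹ ≤ 1 := by
      rw [inv_le_one_iff₀]; right; linarith
    have hcpos : 0 < (s-1)⁻¹ := inv_pos.mpr hs1
    have hsinv : 0 ≤ s⁻¹ := by positivity
    have he : w i 0 * v 0 j = 1 ∨ w i 0 * v 0 j = -1 := by
      rcases hw with hw | hw <;> rcases hv with hv | hv <;> rw [hw, hv] <;> norm_num
    rw [hY, one_div]
    rcases hD with hD | hD <;> rcases he with he | he <;> rw [hD, he]
    · left; rw [abs_of_nonneg (mul_nonneg hsinv (by linarith))]; ring
    · right; rw [abs_of_nonneg (mul_nonneg hsinv (by linarith))]; ring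
    · right
      rw [abs_of_nonpos (by nlinarith [mul_nonneg hsinv (show (0:ℝ) ≤ 1 - (s-1)⁻¹ by linarith)])]
      ring
    · left
      rw [abs_of_nonpos (by nlinarith [mul_nonneg hsinv (show (0:ℝ) ≤ 1 + (s-1)⁻¹ by linarith)])]
      ring
end

section
/- Let n ≥ 1 be a natural and let H be a real Hadamard matrix of order 4n written in block form H = [[U, V], [W, D]] with U of size 2 × 2, and suppose U satisfies U² = 2U − 2I. Then both Y₁ = (1/√(4n)) · (D − ((√(4n)+2)/(4n+2√(4n)+2))·W·V + (1/(4n+2√(4n)+2))·W·U·V) and Y₂ = (1/√(4n)) · (D + ((√(4ن)−2)/(4n−2√(4n)+2))·W·V + (1/(4n−2√(4n)+2))·W·U·V) are orthogonal matrices of order 4n − 2. -/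
open Matrix

lemma key_aux {k : ℕ} (U : Matrix (Fin 2) (Fin 2) ℝ) (V : Matrix (Fin 2) (Fin k) ℝ)
    (W : Matrix (Fin k) (Fin 2) ℝ) (D : Matrix (Fin k) (Fin k) ℝ)
    (a b m s : ℝ)
    (h2 : V * Dᵀ = -(U * Wᵀ)) (h3 : D * Vᵀ = -(W * Uᵀ))
    (h4 : D * Dᵀ = m • (1 : Matrix (Fin k) (Fin k) ℝ) - W * Wᵀ)
    (hVV : V * Vᵀ = (m - 2) • (1 : Matrix (Fin 2) (Fin 2) ℝ))
    (hUt : Uᵀ = (2:ℝ) • (1 : Matrix (Fin 2) (Fin 2) ℝ) - U)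
    (hU2 : U * U = (2:ℝ) • U - (2:ℝ) • (1 : Matrix (Fin 2) (Fin 2) ℝ))
    (hss : s * s = m) (hs0 : s ≠ 0)
    (hc : (m - 2) * (a^2 + 2*a*b + 2*b^2) = 1 + 2*a) :
    (s⁻¹ • (D + a • (W * V) + b • (W * U * V))) *
      (s⁻¹ • (D + a • (W * V) + b • (W * U * V)))ᵀ = 1 := by
  set P : Matrix (Fin 2) (Fin 2) ℝ := a • 1 + b • U with hP
  have hY : D + a • (W * V) + b • (W * U * V) = D + W * (P * V) := by
    rw [hP]
    simp only [Matrix.add_mul, Matrix.smul_mul, Matrix.one_mul, Matrix.mul_add, Matrix.mul_smul,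
      ← Matrix.mul_assoc]
    abel
  rw [hY]
  have hN : (-1 : Matrix (Fin 2) (Fin 2) ℝ) - Uᵀ * Pᵀ - P * U + (m - 2) • (P * Pᵀ) = 0 := by
    have hPt : Pᵀ = a • (1 : Matrix (Fin 2) (Fin 2) ℝ) + b • ((2:ℝ) • 1 - U) := by
      rw [hP]; simp [transpose_add, transpose_smul, hUt]
    rw [hPt, hUt, hP]
    simp only [Matrix.mul_sub, Matrix.sub_mul, Matrix.mul_add, Matrix.add_mul,
      Matrix.smul_mul, Matrix.mul_smul, smul_smul, Matrix.one_mul, Matrix.mul_one, smul_sub,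
      smul_add, hU2]
    match_scalars <;> first | linear_combination hc | ring
  have c2 : D * ((Vᵀ * Pᵀ) * Wᵀ) = -(W * ((Uᵀ * Pᵀ) * Wᵀ)) := by
    rw [← Matrix.mul_assoc, ← Matrix.mul_assoc, h3]
    simp [Matrix.neg_mul, Matrix.mul_assoc]
  have c3 : (W * (P * V)) * Dᵀ = -(W * ((P * U) * Wᵀ)) := by
    rw [Matrix.mul_assoc W (P * V) Dᵀ, Matrix.mul_assoc P V Dᵀ, h2]
    simp [Matrix.mul_neg, Matrix.mul_assoc]
  have c4 : (W * (P * V)) * ((Vᵀ * Pᵀ) * Wᵀ) = (m - 2) • (W * ((P * Pᵀ) * Wᵀ)) := by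
    simp only [Matrix.mul_assoc]
    rw [← Matrix.mul_assoc V Vᵀ, hVV]
    simp [Matrix.smul_mul, Matrix.mul_smul]
  have main : (D + W * (P * V)) * (D + W * (P * V))ᵀ
      = m • (1 : Matrix (Fin k) (Fin k) ℝ)
        + W * (((-1 : Matrix (Fin 2) (Fin 2) ℝ) - Uᵀ * Pᵀ - P * U + (m - 2) • (P * Pᵀ)) * Wᵀ) := by
    rw [transpose_add, transpose_mul, transpose_mul, Matrix.add_mul, Matrix.mul_add,
      Matrix.mul_add, h4, c2, c3, c4]
    simp only [Matrix.sub_mul, Matrix.add_mul, Matrix.neg_mul, Matrix.one_mul, Matrix.smul_mul,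
      Matrix.mul_sub, Matrix.mul_add, Matrix.mul_neg, Matrix.mul_smul]
    abel
  rw [transpose_smul, Matrix.smul_mul, Matrix.mul_smul, smul_smul, main, hN]
  have : s⁻¹ * s⁻¹ * m = 1 := by rw [← hss]; field_simp
  simp [smul_smul, this]

lemma hc1_aux (s : ℝ) (h0 : 0 ≤ s) :
    (s * s - 2) * ((-((s + 2) / (s * s + 2 * s + 2)))^2
        + 2 * (-((s + 2) / (s * s + 2 * s + 2))) * (1 / (s * s + 2 * s + 2))
        + 2 * (1 / (s * s + 2 * s + 2))^2)
      = 1 + 2 * (-((s + 2) / (s * s + 2 * s + 2))) := by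
  have hd : s * s + 2 * s + 2 ≠ 0 := by positivity
  field_simp
  ring

lemma hc2_aux (s : ℝ) :
    (s * s - 2) * (((s - 2) / (s * s - 2 * s + 2))^2
        + 2 * ((s - 2) / (s * s - 2 * s + 2)) * (1 / (s * s - 2 * s + 2))
        + 2 * (1 / (s * s - 2 * s + 2))^2)
      = 1 + 2 * ((s - 2) / (s * s - 2 * s + 2)) := by
  have hd : s * s - 2 * s + 2 ≠ 0 := by nlinarith [sq_nonneg (s - 1)]
  have hd' : s * (s - 2) + 2 ≠ 0 := by nlinarith [sq_nonneg (s - 1)]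
  field_simp
  ring

theorem stmt_10 (n : ℕ) (hn : 1 ≤ n)
    (U : Matrix (Fin 2) (Fin 2) ℝ) (V : Matrix (Fin 2) (Fin (4 * n - 2)) ℝ)
    (W : Matrix (Fin (4 * n - 2)) (Fin 2) ℝ)
    (D : Matrix (Fin (4 * n - 2)) (Fin (4 * n - 2)) ℝ)
    (hent : ∀ i j, Matrix.fromBlocks U V W D i j = 1 ∨ Matrix.fromBlocks U V W D i j = -1)
    (hH : Matrix.fromBlocks U V W D * (Matrix.fromBlocks U V W D)ᵀ
            = (4 * (n : ℝ)) • 1)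
    (hU : U ^ 2 = (2 : ℝ) • U - (2 : ℝ) • (1 : Matrix (Fin 2) (Fin 2) ℝ)) :
    (let s := Real.sqrt (4 * (n : ℝ));
     let Y₁ := s⁻¹ • (D - ((s + 2) / (4 * (n : ℝ) + 2 * s + 2)) • (W * V)
        + (1 / (4 * (n : ℝ) + 2 * s + 2)) • (W * U * V));
     let Y₂ := s⁻¹ • (D + ((s - 2) / (4 * (n : ℝ) - 2 * s + 2)) • (W * V)
        + (1 / (4 * (n : ℝ) - 2 * s + 2)) • (W * U * V));
     Y₁ * Y₁ᵀ = 1 ∧ Y₂ * Y₂ᵀ = 1) := by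
  intro s Y₁ Y₂
  set m : ℝ := 4 * (n : ℝ) with hmdef
  have hn1 : (1:ℝ) ≤ (n:ℝ) := by exact_mod_cast hn
  have hm4 : (4:ℝ) ≤ m := by rw [hmdef]; nlinarith
  have hm0 : (0:ℝ) ≤ m := by linarith
  have hss : s * s = m := Real.mul_self_sqrt hm0
  have hsnn : 0 ≤ s := Real.sqrt_nonneg _
  have hs2 : 2 ≤ s := by nlinarith
  have hs0 : s ≠ 0 := by positivity
  -- block equations
  rw [fromBlocks_transpose, fromBlocks_multiply, ← Matrix.fromBlocks_one, Matrix.fromBlocks_smul]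
    at hH
  obtain ⟨h1, hoff1, hoff2, h4'⟩ := Matrix.fromBlocks_inj.mp hH
  rw [smul_zero] at hoff1 hoff2
  have h2 : V * Dᵀ = -(U * Wᵀ) := eq_neg_of_add_eq_zero_right hoff1
  have h3 : D * Vᵀ = -(W * Uᵀ) := eq_neg_of_add_eq_zero_right hoff2
  have h4 : D * Dᵀ = m • (1 : Matrix (Fin (4*n-2)) (Fin (4*n-2)) ℝ) - W * Wᵀ :=
    eq_sub_of_add_eq' h4'
  -- structure of U
  have hpm : ∀ i j : Fin 2, U i j = 1 ∨ U i j = -1 := fun i j => by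
    simpa using hent (Sum.inl i) (Sum.inl j)
  have hU2 : U * U = (2:ℝ) • U - (2:ℝ) • (1 : Matrix (Fin 2) (Fin 2) ℝ) := by
    rw [← pow_two]; exact hU
  have E00 : U 0 0 * U 0 0 + U 0 1 * U 1 0 = 2 * U 0 0 - 2 := by
    have h := congrFun (congrFun hU2 0) 0
    simpa [Matrix.mul_apply, Fin.sum_univ_two, Matrix.smul_apply, Matrix.sub_apply,
      Matrix.one_apply, smul_eq_mul] using h
  have E11 : U 1 0 * U 0 1 + U 1 1 * U 1 1 = 2 * U 1 1 - 2 := by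
    have h := congrFun (congrFun hU2 1) 1
    simpa [Matrix.mul_apply, Fin.sum_univ_two, Matrix.smul_apply, Matrix.sub_apply,
      Matrix.one_apply, smul_eq_mul] using h
  have hU00 : U 0 0 = 1 := by
    rcases hpm 0 0 with h | h
    · exact h
    · exfalso
      rcases hpm 0 1 with h1 | h1 <;> rcases hpm 1 0 with h2' | h2' <;>
        rw [h, h1, h2'] at E00 <;> norm_num at E00
  have hU11 : U 1 1 = 1 := by
    rcases hpm 1 1 with h | h
    · exact h
    · exfalso
      rcases hpm 0 1 with h1 | h1 <;> rcases hpm 1 0 with h2' | h2' <;>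
        rw [h, h1, h2'] at E11 <;> norm_num at E11
  have h10 : U 1 0 = -U 0 1 := by
    rcases hpm 0 1 with h1 | h1 <;> rcases hpm 1 0 with h2' | h2' <;>
      rw [hU00, h1, h2'] at E00 <;> rw [h1, h2'] <;> norm_num at E00 <;> norm_num
  have hUt : Uᵀ = (2:ℝ) • (1 : Matrix (Fin 2) (Fin 2) ℝ) - U := by
    ext i j
    fin_cases i <;> fin_cases j <;>
      simp [Matrix.transpose_apply, Matrix.one_apply, Matrix.smul_apply, Matrix.sub_apply,
        hU00, hU11, h10] <;> norm_num
  have hUUt : U * Uᵀ = (2:ℝ) • (1 : Matrix (Fin 2) (Fin 2) ℝ) := by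
    rw [hUt, Matrix.mul_sub, Matrix.mul_smul, Matrix.mul_one, hU2]
    abel
  have hVV : V * Vᵀ = (m - 2) • (1 : Matrix (Fin 2) (Fin 2) ℝ) := by
    rw [hUUt] at h1
    rw [eq_sub_of_add_eq' h1]
    module
  have hden1 : m + 2 * s + 2 ≠ 0 := by positivity
  have hden2 : m - 2 * s + 2 ≠ 0 := by nlinarith [sq_nonneg (s - 1)]
  constructor
  · have hY1 : Y₁ = s⁻¹ • (D + (-((s + 2) / (m + 2 * s + 2))) • (W * V)
        + (1 / (m + 2 * s + 2)) • (W * U * V)) := by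
      rw [show Y₁ = s⁻¹ • (D - ((s + 2) / (m + 2 * s + 2)) • (W * V)
        + (1 / (m + 2 * s + 2)) • (W * U * V)) from rfl, sub_eq_add_neg, ← neg_smul]
    rw [hY1]
    refine key_aux U V W D _ _ m s h2 h3 h4 hVV hUt hU2 hss hs0 ?_
    rw [← hss]
    exact hc1_aux s hsnn
  · have hY2 : Y₂ = s⁻¹ • (D + ((s - 2) / (m - 2 * s + 2)) • (W * V)
        + (1 / (m - 2 * s + 2)) • (W * U * V)) := rfl
    rw [hY2]
    refine key_aux U V W D _ _ m s h2 h3 h4 hVV hUt hU2 hss hs0 ?_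
    rw [← hss]
    exact hc2_aux s
end

section
/- Let n ≥ 1 be a natural and let H be a real Hadamard matrix of order 4n written in block form H = [[U, V], [W, D]] with U of size 2 × 2, and suppose U satisfies U² = −2U − 2I. Then both Y₁ = (1/√(4n)) · (D − ((√(4n)−2)/(4n−2√(4n)+2))·W·V + (1/(4n−2√(4n)+2))·W·U·V) and Y₂ = (1/√(4n)) · (D + ((√(4n)+2)/(4n+2√(4n)+2))·W·V + (1/(4n+2√(4n)+2))·W·U·V) are orthogonal matrices of order 4n − 2. -/
open Matrix

theorem aux_main {k : Type*} [Fintype k] [DecidableEq k]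
    (m s α β : ℝ) (hs2 : s * s = m) (hs0 : s ≠ 0)
    (U : Matrix (Fin 2) (Fin 2) ℝ) (V : Matrix (Fin 2) k ℝ)
    (W : Matrix k (Fin 2) ℝ) (D : Matrix k k ℝ)
    (hU2 : U * U = -((2 : ℝ) • U) - (2 : ℝ) • (1 : Matrix (Fin 2) (Fin 2) ℝ))
    (hUt : Uᵀ = -U - (2 : ℝ) • 1)
    (hVV : V * Vᵀ = (m - 2) • (1 : Matrix (Fin 2) (Fin 2) ℝ))
    (hVD : V * Dᵀ = -(U * Wᵀ))
    (hDV : D * Vᵀ = -(W * Uᵀ))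
    (hDD : D * Dᵀ = m • 1 - W * Wᵀ)
    (hcoef : -1 + 2*α + (m-2)*(α^2 - 2*α*β + 2*β^2) = 0) :
    (s⁻¹ • (D + α • (W * V) + β • (W * U * V))) *
      (s⁻¹ • (D + α • (W * V) + β • (W * U * V)))ᵀ = 1 := by
  set A : Matrix (Fin 2) (Fin 2) ℝ := α • 1 + β • U with hA
  have hAU : A * U = (α - 2*β) • U + (-(2*β)) • 1 := by
    rw [hA, Matrix.add_mul, Matrix.smul_mul, Matrix.smul_mul, Matrix.one_mul, hU2]
    module
  have hUtAt : Uᵀ * Aᵀ = (2*β - 2*α) • 1 + (2*β - α) • U := by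
    rw [← transpose_mul, hAU, transpose_add, transpose_smul, transpose_smul,
      transpose_one, hUt]
    module
  have hAt : Aᵀ = (α - 2*β) • 1 + (-β) • U := by
    rw [hA, transpose_add, transpose_smul, transpose_smul, transpose_one, hUt]
    module
  have hAAt : A * Aᵀ = (α^2 - 2*α*β + 2*β^2) • 1 := by
    rw [hAt, hA]
    simp only [Matrix.add_mul, Matrix.mul_add, Matrix.smul_mul, Matrix.mul_smul,
      Matrix.one_mul, Matrix.mul_one, hU2]
    module
  have hAUW : A * (U * Wᵀ) = (α - 2*β) • (U * Wᵀ) + (-(2*β)) • Wᵀ := by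
    rw [← Matrix.mul_assoc, hAU, Matrix.add_mul, Matrix.smul_mul, Matrix.smul_mul,
      Matrix.one_mul]
  have hUtAtW : Uᵀ * (Aᵀ * Wᵀ) = (2*β - 2*α) • Wᵀ + (2*β - α) • (U * Wᵀ) := by
    rw [← Matrix.mul_assoc, hUtAt, Matrix.add_mul, Matrix.smul_mul, Matrix.smul_mul,
      Matrix.one_mul]
  have hAAtW : A * (Aᵀ * Wᵀ) = (α^2 - 2*α*β + 2*β^2) • Wᵀ := by
    rw [← Matrix.mul_assoc, hAAt, Matrix.smul_mul, Matrix.one_mul]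
  have hN : D + α • (W * V) + β • (W * U * V) = D + W * (A * V) := by
    rw [hA]
    simp only [Matrix.add_mul, Matrix.mul_add, Matrix.smul_mul, Matrix.mul_smul,
      Matrix.one_mul, Matrix.mul_assoc]
    abel
  rw [hN]
  have t2 : D * (Vᵀ * (Aᵀ * Wᵀ)) = (2*α - 2*β) • (W * Wᵀ) + (α - 2*β) • (W * (U * Wᵀ)) := by
    rw [← Matrix.mul_assoc, hDV, Matrix.neg_mul, Matrix.mul_assoc, hUtAtW]
    simp only [Matrix.mul_add, Matrix.mul_smul]
    module
  have t3 : W * (A * (V * Dᵀ)) = (2*β) • (W * Wᵀ) + (-(α - 2*β)) • (W * (U * Wᵀ)) := by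
    rw [hVD, Matrix.mul_neg, hAUW, Matrix.mul_neg]
    simp only [Matrix.mul_add, Matrix.mul_smul]
    module
  have t4 : W * (A * (V * (Vᵀ * (Aᵀ * Wᵀ)))) =
      ((m - 2) * (α^2 - 2*α*β + 2*β^2)) • (W * Wᵀ) := by
    rw [← Matrix.mul_assoc V, hVV, Matrix.smul_mul, Matrix.one_mul, Matrix.mul_smul, hAAtW,
      Matrix.mul_smul, Matrix.mul_smul, smul_smul]
  have key : (D + W * (A * V)) * (D + W * (A * V))ᵀ = m • 1 := by
    have expand : (D + W * (A * V)) * (D + W * (A * V))ᵀ =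
        D * Dᵀ + D * (Vᵀ * (Aᵀ * Wᵀ)) +
          (W * (A * (V * Dᵀ)) + W * (A * (V * (Vᵀ * (Aᵀ * Wᵀ))))) := by
      simp only [transpose_add, transpose_mul, Matrix.mul_add, Matrix.add_mul,
        Matrix.mul_assoc]
      abel
    rw [expand, hDD, t2, t3, t4]
    match_scalars <;> (first | ring1 | linear_combination hcoef | linear_combination -hcoef)
  rw [transpose_smul, Matrix.smul_mul, Matrix.mul_smul, key, smul_smul, smul_smul]
  have hm0 : m ≠ 0 := by rw [← hs2]; exact mul_ne_zero hs0 hs0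
  have : s⁻¹ * s⁻¹ * m = 1 := by
    rw [← mul_inv, hs2]
    exact inv_mul_cancel₀ hm0
  rw [this, one_smul]

theorem stmt_11 (n : ℕ) (hn : 1 ≤ n)
    (U : Matrix (Fin 2) (Fin 2) ℝ) (V : Matrix (Fin 2) (Fin (4 * n - 2)) ℝ)
    (W : Matrix (Fin (4 * n - 2)) (Fin 2) ℝ)
    (D : Matrix (Fin (4 * n - 2)) (Fin (4 * n - 2)) ℝ)
    (hent : ∀ i j, Matrix.fromBlocks U V W D i j = 1 ∨ Matrix.fromBlocks U V W D i j = -1)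
    (hH : Matrix.fromBlocks U V W D * (Matrix.fromBlocks U V W D)ᵀ
            = (4 * (n : ℝ)) • 1)
    (hU : U ^ 2 = -((2 : ℝ) • U) - (2 : ℝ) • (1 : Matrix (Fin 2) (Fin 2) ℝ)) :
    (let s := Real.sqrt (4 * (n : ℝ));
     let Y₁ := s⁻¹ • (D - ((s - 2) / (4 * (n : ℝ) - 2 * s + 2)) • (W * V)
        + (1 / (4 * (n : ℝ) - 2 * s + 2)) • (W * U * V));
     let Y₂ := s⁻¹ • (D + ((s + 2) / (4 * (n : ℝ) + 2 * s + 2)) • (W * V)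
        + (1 / (4 * (n : ℝ) + 2 * s + 2)) • (W * U * V));
     Y₁ * Y₁ᵀ = 1 ∧ Y₂ * Y₂ᵀ = 1) := by
  intro s Y₁ Y₂
  have hn' : (1 : ℝ) ≤ (n : ℝ) := by exact_mod_cast hn
  have hmpos : (0 : ℝ) < 4 * (n : ℝ) := by linarith
  have hs2 : s * s = 4 * (n : ℝ) := Real.mul_self_sqrt (le_of_lt hmpos)
  have hs0 : s ≠ 0 := by
    intro h
    rw [h, mul_zero] at hs2
    linarith
  rw [pow_two] at hU
  -- entry facts for U
  have h00 := hent (Sum.inl 0) (Sum.inl 0)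
  have h01 := hent (Sum.inl 0) (Sum.inl 1)
  have h10 := hent (Sum.inl 1) (Sum.inl 0)
  have h11 := hent (Sum.inl 1) (Sum.inl 1)
  simp only [Matrix.fromBlocks_apply₁₁] at h00 h01 h10 h11
  have q00 := congrFun (congrFun hU 0) 0
  have q11 := congrFun (congrFun hU 1) 1
  simp only [Matrix.mul_apply, Fin.sum_univ_two, Matrix.sub_apply, Matrix.neg_apply,
    Matrix.smul_apply, Matrix.one_apply, smul_eq_mul] at q00 q11
  norm_num at q00 q11
  have fa : U 0 0 = -1 := by
    rcases h00 with h | h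
    · exfalso
      rcases h01 with h' | h' <;> rcases h10 with h'' | h'' <;>
        rw [h, h', h''] at q00 <;> norm_num at q00
    · exact h
  have fd : U 1 1 = -1 := by
    rcases h11 with h | h
    · exfalso
      rcases h01 with h' | h' <;> rcases h10 with h'' | h'' <;>
        rw [h, h', h''] at q11 <;> norm_num at q11
    · exact h
  have fbc : U 1 0 = -U 0 1 := by
    rcases h01 with h' | h' <;> rcases h10 with h'' | h'' <;>
      rw [fa, h', h''] at q00 <;> rw [h', h''] <;> norm_num at q00 <;> norm_num
  have hUt : Uᵀ = -U - (2 : ℝ) • 1 := by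
    ext i j
    fin_cases i <;> fin_cases j <;>
      simp [Matrix.one_apply, fa, fd, fbc] <;> linarith [fbc]
  have hUUt : U * Uᵀ = (2 : ℝ) • (1 : Matrix (Fin 2) (Fin 2) ℝ) := by
    rw [hUt, Matrix.mul_sub, Matrix.mul_neg, hU, Matrix.mul_smul, Matrix.mul_one]
    module
  -- block equations
  rw [fromBlocks_transpose, fromBlocks_multiply, ← Matrix.fromBlocks_one,
    Matrix.fromBlocks_smul, Matrix.fromBlocks_inj] at hH
  obtain ⟨e11, e12, e21, e22⟩ := hH
  rw [smul_zero] at e12 e21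
  have hVD : V * Dᵀ = -(U * Wᵀ) := eq_neg_of_add_eq_zero_right e12
  have hDV : D * Vᵀ = -(W * Uᵀ) := eq_neg_of_add_eq_zero_right e21
  have hDD : D * Dᵀ = (4 * (n : ℝ)) • 1 - W * Wᵀ := eq_sub_of_add_eq' e22
  have hVV : V * Vᵀ = (4 * (n : ℝ) - 2) • (1 : Matrix (Fin 2) (Fin 2) ℝ) := by
    have h := eq_sub_of_add_eq' e11
    rw [hUUt] at h
    rw [h]
    module
  constructor
  · have hden : 4 * (n : ℝ) - 2 * s + 2 ≠ 0 := by nlinarith [sq_nonneg (s - 1)]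
    have hcoef : -1 + 2 * (-((s - 2) / (4 * (n : ℝ) - 2 * s + 2)))
        + (4 * (n : ℝ) - 2) * ((-((s - 2) / (4 * (n : ℝ) - 2 * s + 2)))^2
          - 2 * (-((s - 2) / (4 * (n : ℝ) - 2 * s + 2))) * (1 / (4 * (n : ℝ) - 2 * s + 2))
          + 2 * (1 / (4 * (n : ℝ) - 2 * s + 2))^2) = 0 := by
      rw [← hs2] at hden ⊢
      have hden' : s * (s - 2) + 2 ≠ 0 := by intro h; apply hden; linarith
      field_simp
      ring
    have e : D - ((s - 2) / (4 * (n : ℝ) - 2 * s + 2)) • (W * V)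
          + (1 / (4 * (n : ℝ) - 2 * s + 2)) • (W * U * V)
        = D + (-((s - 2) / (4 * (n : ℝ) - 2 * s + 2))) • (W * V)
          + (1 / (4 * (n : ℝ) - 2 * s + 2)) • (W * U * V) := by
      module
    show s⁻¹ • (D - ((s - 2) / (4 * (n : ℝ) - 2 * s + 2)) • (W * V)
        + (1 / (4 * (n : ℝ) - 2 * s + 2)) • (W * U * V)) *
      (s⁻¹ • (D - ((s - 2) / (4 * (n : ℝ) - 2 * s + 2)) • (W * V)
        + (1 / (4 * (n : ℝ) - 2 * s + 2)) • (W * U * V)))ᵀ = 1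
    rw [e]
    exact aux_main (4 * (n : ℝ)) s _ _ hs2 hs0 U V W D hU hUt hVV hVD hDV hDD hcoef
  · have hden : 4 * (n : ℝ) + 2 * s + 2 ≠ 0 := by nlinarith [sq_nonneg (s + 1)]
    have hcoef : -1 + 2 * ((s + 2) / (4 * (n : ℝ) + 2 * s + 2))
        + (4 * (n : ℝ) - 2) * (((s + 2) / (4 * (n : ℝ) + 2 * s + 2))^2
          - 2 * ((s + 2) / (4 * (n : ℝ) + 2 * s + 2)) * (1 / (4 * (n : ℝ) + 2 * s + 2))
          + 2 * (1 / (4 * (n : ℝ) + 2 * s + 2))^2) = 0 := by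
      rw [← hs2] at hden ⊢
      have hden' : s * (s + 2) + 2 ≠ 0 := by intro h; apply hden; linarith
      field_simp
      ring
    show s⁻¹ • (D + ((s + 2) / (4 * (n : ℝ) + 2 * s + 2)) • (W * V)
        + (1 / (4 * (n : ℝ) + 2 * s + 2)) • (W * U * V)) *
      (s⁻¹ • (D + ((s + 2) / (4 * (n : ℝ) + 2 * s + 2)) • (W * V)
        + (1 / (4 * (n : ℝ) + 2 * s + 2)) • (W * U * V)))ᵀ = 1
    exact aux_main (4 * (n : ℝ)) s _ _ hs2 hs0 U V W D hU hUt hVV hVD hDV hDD hcoef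
end

section
/- Let n ≥ 2 be a natural and let H be a real Hadamard matrix of order 4n written in block form H = [[U, V], [W, D]] with U of size 3 × 3, and suppose U satisfies U³ = −U² + 4U + 4I. Set Δ₁ = 4n√(4n) − 4n − 4√(4n) + 4 and Δ₂ = 4n√(4n) + 4n − 4√(4n) − 4. Then both Y₁ = (1/√(4n)) · (D − ((4n−√(4n)−4)/Δ₁)·W·V + ((√(4n)−1)/Δ₁)·W·U·V − (1/Δ₁)·W·U²·V) and Y₂ = (1/√(4n)) · (D + ((4n+√(4n)−4)/Δ₂)·W·V + ((√(4n)+1)/Δ₂)·W·U·V + (1/Δ₂)·W·U²·V) are orthogonal matrices of order 4n − 3. -/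
open Matrix

lemma aux_ortho {l : Type*} [Fintype l] [DecidableEq l]
    (m ε : ℝ) (U P : Matrix (Fin 3) (Fin 3) ℝ) (V : Matrix (Fin 3) l ℝ)
    (W : Matrix l (Fin 3) ℝ) (D : Matrix l l ℝ)
    (hε : ε * ε = m)
    (e1 : D * Dᵀ = m • (1 : Matrix l l ℝ) - W * Wᵀ)
    (e2 : D * Vᵀ = -(W * Uᵀ))
    (e4 : V * Vᵀ = m • (1 : Matrix (Fin 3) (Fin 3) ℝ) - U * Uᵀ)
    (e5 : P * U = ε • P - 1) :
    (D + W * (P * V)) * (D + W * (P * V))ᵀ = m • 1 := by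
  subst hε
  have e3 : V * Dᵀ = -(U * Wᵀ) := by
    have := congrArg Matrix.transpose e2
    simpa [Matrix.transpose_mul] using this
  have e6 : Uᵀ * Pᵀ = ε • Pᵀ - 1 := by
    have := congrArg Matrix.transpose e5
    simpa [Matrix.transpose_mul, Matrix.transpose_smul] using this
  have f2 : ∀ X : Matrix (Fin 3) l ℝ, D * (Vᵀ * X) = -(W * (Uᵀ * X)) := by
    intro X
    rw [← Matrix.mul_assoc, e2, Matrix.neg_mul, Matrix.mul_assoc]
  have f4 : ∀ X : Matrix (Fin 3) l ℝ,
      V * (Vᵀ * X) = (ε * ε) • X - U * (Uᵀ * X) := by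
    intro X
    rw [← Matrix.mul_assoc, e4, Matrix.sub_mul, Matrix.smul_mul, Matrix.one_mul,
      Matrix.mul_assoc]
  have g5 : ∀ X : Matrix (Fin 3) l ℝ, P * (U * X) = ε • (P * X) - X := by
    intro X
    rw [← Matrix.mul_assoc, e5, Matrix.sub_mul, Matrix.smul_mul, Matrix.one_mul]
  have g6 : ∀ X : Matrix (Fin 3) l ℝ, Uᵀ * (Pᵀ * X) = ε • (Pᵀ * X) - X := by
    intro X
    rw [← Matrix.mul_assoc, e6, Matrix.sub_mul, Matrix.smul_mul, Matrix.one_mul]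
  simp only [Matrix.transpose_add, Matrix.transpose_mul, Matrix.add_mul, Matrix.mul_add,
    Matrix.mul_assoc, e1, e3, f2, f4, g5, g6, Matrix.mul_sub, Matrix.sub_mul,
    Matrix.mul_neg, Matrix.neg_mul, Matrix.mul_smul, Matrix.smul_mul, Matrix.mul_one,
    smul_sub, smul_smul]
  module

set_option maxHeartbeats 1600000 in
theorem stmt_12 (n : ℕ) (hn : 2 ≤ n)
    (U : Matrix (Fin 3) (Fin 3) ℝ) (V : Matrix (Fin 3) (Fin (4 * n - 3)) ℝ)
    (W : Matrix (Fin (4 * n - 3)) (Fin 3) ℝ)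
    (D : Matrix (Fin (4 * n - 3)) (Fin (4 * n - 3)) ℝ)
    (hent : ∀ i j, Matrix.fromBlocks U V W D i j = 1 ∨ Matrix.fromBlocks U V W D i j = -1)
    (hH : Matrix.fromBlocks U V W D * (Matrix.fromBlocks U V W D)ᵀ
            = (4 * (n : ℝ)) • 1)
    (hU : U ^ 3 = -(U ^ 2) + (4 : ℝ) • U + (4 : ℝ) • (1 : Matrix (Fin 3) (Fin 3) ℝ)) :
    (let s := Real.sqrt (4 * (n : ℝ));
     let Δ₁ := 4 * (n : ℝ) * s - 4 * (n : ℝ) - 4 * s + 4;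
     let Δ₂ := 4 * (n : ℝ) * s + 4 * (n : ℝ) - 4 * s - 4;
     let Y₁ := s⁻¹ • (D - ((4 * (n : ℝ) - s - 4) / Δ₁) • (W * V)
        + ((s - 1) / Δ₁) • (W * U * V) - (1 / Δ₁) • (W * U ^ 2 * V));
     let Y₂ := s⁻¹ • (D + ((4 * (n : ℝ) + s - 4) / Δ₂) • (W * V)
        + ((s + 1) / Δ₂) • (W * U * V) + (1 / Δ₂) • (W * U ^ 2 * V));
     Y₁ * Y₁ᵀ = 1 ∧ Y₂ * Y₂ᵀ = 1) := by
  intro s Δ₁ Δ₂ Y₁ Y₂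
  have hs' : s = Real.sqrt (4 * (n : ℝ)) := rfl
  have hΔ₁' : Δ₁ = 4 * (n : ℝ) * s - 4 * (n : ℝ) - 4 * s + 4 := rfl
  have hΔ₂' : Δ₂ = 4 * (n : ℝ) * s + 4 * (n : ℝ) - 4 * s - 4 := rfl
  have hY₁' : Y₁ = s⁻¹ • (D - ((4 * (n : ℝ) - s - 4) / Δ₁) • (W * V)
        + ((s - 1) / Δ₁) • (W * U * V) - (1 / Δ₁) • (W * U ^ 2 * V)) := rfl
  have hY₂' : Y₂ = s⁻¹ • (D + ((4 * (n : ℝ) + s - 4) / Δ₂) • (W * V)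
        + ((s + 1) / Δ₂) • (W * U * V) + (1 / Δ₂) • (W * U ^ 2 * V)) := rfl
  clear_value s Δ₁ Δ₂ Y₁ Y₂
  -- block equations
  have hH' : Matrix.fromBlocks (U * Uᵀ + V * Vᵀ) (U * Wᵀ + V * Dᵀ)
      (W * Uᵀ + D * Vᵀ) (W * Wᵀ + D * Dᵀ)
      = Matrix.fromBlocks ((4 * (n : ℝ)) • 1) 0 0 ((4 * (n : ℝ)) • 1) := by
    simpa [Matrix.fromBlocks_transpose, Matrix.fromBlocks_multiply,
      ← Matrix.fromBlocks_one, Matrix.fromBlocks_smul, smul_zero] using hH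
  obtain ⟨h11, h12, h21, h22⟩ := Matrix.fromBlocks_inj.mp hH'
  have e1 : D * Dᵀ = (4 * (n : ℝ)) • 1 - W * Wᵀ := by
    rw [← h22]; abel
  have e2 : D * Vᵀ = -(W * Uᵀ) := by
    have := h21; linear_combination (norm := abel) this
  have e4 : V * Vᵀ = (4 * (n : ℝ)) • 1 - U * Uᵀ := by
    rw [← h11]; abel
  -- scalar facts
  have hn2 : (2 : ℝ) ≤ (n : ℝ) := by exact_mod_cast hn
  have hm0 : (0 : ℝ) ≤ 4 * (n : ℝ) := by linarith
  have hs2 : s * s = 4 * (n : ℝ) := by rw [hs']; exact Real.mul_self_sqrt hm0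
  have hs0 : 0 ≤ s := by rw [hs']; exact Real.sqrt_nonneg _
  have hsgt : 2 < s := by nlinarith
  have hsne : s ≠ 0 := by linarith
  have hΔ₁ : Δ₁ ≠ 0 := by
    have h1 : (0:ℝ) < (4 * (n:ℝ) - 4) * (s - 1) := mul_pos (by linarith) (by linarith)
    have h2 : 4 * (n:ℝ) * s - 4 * (n:ℝ) - 4 * s + 4 = (4 * (n:ℝ) - 4) * (s - 1) := by ring
    rw [hΔ₁', h2]; exact ne_of_gt h1
  have hΔ₂ : Δ₂ ≠ 0 := by
    have h1 : (0:ℝ) < (4 * (n:ℝ) - 4) * (s + 1) := mul_pos (by linarith) (by linarith)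
    have h2 : 4 * (n:ℝ) * s + 4 * (n:ℝ) - 4 * s - 4 = (4 * (n:ℝ) - 4) * (s + 1) := by ring
    rw [hΔ₂', h2]; exact ne_of_gt h1
  have hUU : U * U = U ^ 2 := (pow_two U).symm
  have hU2U : U ^ 2 * U = U ^ 3 := (pow_succ U 2).symm
  constructor
  · -- Y₁
    set P : Matrix (Fin 3) (Fin 3) ℝ :=
      (-((4 * (n : ℝ) - s - 4) / Δ₁)) • 1 + ((s - 1) / Δ₁) • U + (-(1 / Δ₁)) • U ^ 2 with hP
    have hPU : P * U = (-s) • P - 1 := by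
      rw [hP]
      simp only [Matrix.add_mul, Matrix.smul_mul, Matrix.one_mul, hUU, hU2U, hU]
      match_scalars
      · field_simp
        linear_combination hs2
      · field_simp
        ring
      · field_simp
        linear_combination hs2 + hΔ₁'
    have hE : D - ((4 * (n : ℝ) - s - 4) / Δ₁) • (W * V)
        + ((s - 1) / Δ₁) • (W * U * V) - (1 / Δ₁) • (W * U ^ 2 * V)
        = D + W * (P * V) := by
      rw [hP]
      simp only [Matrix.add_mul, Matrix.smul_mul, Matrix.one_mul, Matrix.mul_add,
        Matrix.mul_smul, Matrix.mul_assoc]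
      module
    have key := aux_ortho (4 * (n : ℝ)) (-s) U P V W D (by nlinarith) e1 e2 e4 hPU
    rw [hY₁', hE, Matrix.transpose_smul, Matrix.smul_mul, Matrix.mul_smul, key,
      smul_smul, smul_smul]
    rw [show s⁻¹ * s⁻¹ * (4 * (n : ℝ)) = 1 by
      field_simp
      linarith [hs2]]
    exact one_smul _ _
  · -- Y₂
    set P : Matrix (Fin 3) (Fin 3) ℝ :=
      ((4 * (n : ℝ) + s - 4) / Δ₂) • 1 + ((s + 1) / Δ₂) • U + (1 / Δ₂) • U ^ 2 with hP
    have hPU : P * U = s • P - 1 := by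
      rw [hP]
      simp only [Matrix.add_mul, Matrix.smul_mul, Matrix.one_mul, hUU, hU2U, hU]
      match_scalars
      · field_simp
        linear_combination -hs2
      · field_simp
        ring
      · field_simp
        linear_combination -hs2 + hΔ₂'
    have hE : D + ((4 * (n : ℝ) + s - 4) / Δ₂) • (W * V)
        + ((s + 1) / Δ₂) • (W * U * V) + (1 / Δ₂) • (W * U ^ 2 * V)
        = D + W * (P * V) := by
      rw [hP]
      simp only [Matrix.add_mul, Matrix.smul_mul, Matrix.one_mul, Matrix.mul_add,
        Matrix.mul_smul, Matrix.mul_assoc]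
      module
    have key := aux_ortho (4 * (n : ℝ)) s U P V W D hs2 e1 e2 e4 hPU
    rw [hY₂', hE, Matrix.transpose_smul, Matrix.smul_mul, Matrix.mul_smul, key,
      smul_smul, smul_smul]
    rw [show s⁻¹ * s⁻¹ * (4 * (n : ℝ)) = 1 by
      field_simp
      linarith [hs2]]
    exact one_smul _ _
end

section
/- Let n ≥ 2 be a natural and let H be a real Hadamard matrix of order 4n written in block form H = [[U, V], [W, D]] with U of size 3 × 3, and suppose U satisfies U³ = U² + 4U − 4I. Set Δ₁ = 4n√(4n) − 4n − 4√(4n) + 4 and Δ₂ = 4n√(4n) + 4n − 4√(4n) − 4. Then both Y₁ = (1/√(4n)) · (D − ((4n+√(4n)−4)/Δ₂)·W·V + ((√(4n)+1)/Δ₂)·W·U·V − (1/Δ₂)·W·U²·V) and Y₂ = (1/√(4n)) · (D + ((4n−√(4n)−4)/Δ₁)·W·V + ((√(4n)−1)/Δ₁)·W·U·V + (1/Δ₁)·W·U²·V) are orthogonal matrices of order 4n − 3. -/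
open Matrix

private lemma matrix_aux {N : Type*} [Fintype N] [DecidableEq N] (s e : ℝ) (hs : s ≠ 0)
    (he : e * e = 1)
    (U : Matrix (Fin 3) (Fin 3) ℝ) (V : Matrix (Fin 3) N ℝ) (W : Matrix N (Fin 3) ℝ)
    (D : Matrix N N ℝ)
    (h11 : U * Uᵀ + V * Vᵀ = (s ^ 2) • 1)
    (h21 : W * Uᵀ + D * Vᵀ = 0)
    (h22 : W * Wᵀ + D * Dᵀ = (s ^ 2) • 1)
    (P : Matrix (Fin 3) (Fin 3) ℝ)
    (hEP : (s • (1 : Matrix (Fin 3) (Fin 3) ℝ) + e • U) * P = (-e) • 1)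
    (hPE : P * (s • (1 : Matrix (Fin 3) (Fin 3) ℝ) + e • U) = (-e) • 1) :
    (s⁻¹ • (D + W * P * V)) * (s⁻¹ • (D + W * P * V))ᵀ = 1 := by
  have hee : e * -e = (-1 : ℝ) := by linear_combination -he
  have hUP : U * P = (-1 : ℝ) • 1 - (e * s) • P := by
    have h : s • P + e • (U * P) = (-e) • 1 := by
      rw [← hEP, add_mul, smul_mul_assoc, smul_mul_assoc, one_mul]
    have h2 := congrArg (fun X => e • X) h
    simp only [smul_add, smul_smul] at h2
    rw [he, one_smul] at h2
    have h3 := sub_eq_of_eq_add' h2.symm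
    rw [← h3, hee]
  have hPU : P * U = (-1 : ℝ) • 1 - (e * s) • P := by
    have h : s • P + e • (P * U) = (-e) • 1 := by
      rw [← hPE, mul_add, mul_smul_comm, mul_smul_comm, mul_one]
    have h2 := congrArg (fun X => e • X) h
    simp only [smul_add, smul_smul] at h2
    rw [he, one_smul] at h2
    have h3 := sub_eq_of_eq_add' h2.symm
    rw [← h3, hee]
  have hUtPt : Uᵀ * Pᵀ = (-1 : ℝ) • 1 - (e * s) • Pᵀ := by
    have := congrArg Matrix.transpose hPU
    simpa [Matrix.transpose_mul, Matrix.transpose_smul, Matrix.transpose_sub] using this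
  have hDD : D * Dᵀ = (s ^ 2) • 1 - W * Wᵀ := by rw [← h22]; abel
  have hVV : V * Vᵀ = (s ^ 2) • 1 - U * Uᵀ := by rw [← h11]; abel
  have hDV : D * Vᵀ = -(W * Uᵀ) := by
    have := h21; rwa [add_comm, add_eq_zero_iff_eq_neg] at this
  have hVD : V * Dᵀ = -(U * Wᵀ) := by
    have := congrArg Matrix.transpose hDV
    simpa [Matrix.transpose_mul] using this
  have L2 : D * (Vᵀ * (Pᵀ * Wᵀ)) = W * Wᵀ + (e * s) • (W * (Pᵀ * Wᵀ)) := by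
    rw [← Matrix.mul_assoc, hDV, Matrix.neg_mul, ← Matrix.mul_assoc, Matrix.mul_assoc W Uᵀ Pᵀ,
      hUtPt]
    simp only [Matrix.mul_sub, Matrix.sub_mul, Matrix.mul_add, Matrix.add_mul, Matrix.mul_smul,
      Matrix.smul_mul, Matrix.mul_one, Matrix.one_mul, Matrix.neg_mul, Matrix.mul_neg,
      Matrix.mul_assoc]
    try module
  have L3 : W * P * V * Dᵀ = W * Wᵀ + (e * s) • (W * (P * Wᵀ)) := by
    rw [Matrix.mul_assoc, hVD, Matrix.mul_assoc, Matrix.mul_neg, ← Matrix.mul_assoc P U Wᵀ,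
      hPU]
    simp only [Matrix.mul_sub, Matrix.sub_mul, Matrix.mul_add, Matrix.add_mul, Matrix.mul_smul,
      Matrix.smul_mul, Matrix.mul_one, Matrix.one_mul, Matrix.neg_mul, Matrix.mul_neg,
      Matrix.mul_assoc]
    try module
  have L4 : W * P * V * (Vᵀ * (Pᵀ * Wᵀ))
      = (s ^ 2) • (W * (P * (Pᵀ * Wᵀ))) - W * (P * (U * (Uᵀ * (Pᵀ * Wᵀ)))) := by
    rw [Matrix.mul_assoc (W * P) V, ← Matrix.mul_assoc V Vᵀ, hVV]
    simp only [Matrix.mul_sub, Matrix.sub_mul, Matrix.mul_add, Matrix.add_mul, Matrix.mul_smul,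
      Matrix.smul_mul, Matrix.mul_one, Matrix.one_mul, Matrix.neg_mul, Matrix.mul_neg,
      Matrix.mul_assoc]
    try module
  have L5 : W * (P * (U * (Uᵀ * (Pᵀ * Wᵀ))))
      = W * Wᵀ + (e * s) • (W * (P * Wᵀ)) + (e * s) • (W * (Pᵀ * Wᵀ))
        + (s ^ 2) • (W * (P * (Pᵀ * Wᵀ))) := by
    rw [← Matrix.mul_assoc P U, hPU, ← Matrix.mul_assoc Uᵀ Pᵀ, hUtPt]
    simp only [Matrix.mul_sub, Matrix.sub_mul, Matrix.mul_add, Matrix.add_mul, Matrix.mul_smul,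
      Matrix.smul_mul, Matrix.mul_one, Matrix.one_mul, Matrix.neg_mul, Matrix.mul_neg,
      Matrix.mul_assoc, smul_smul, hee]
    match_scalars <;>
      first
        | ring1
        | linear_combination s ^ 2 * he
        | linear_combination (-(s ^ 2)) * he
  have hX : (D + W * P * V) * (D + W * P * V)ᵀ = (s ^ 2) • 1 := by
    rw [Matrix.transpose_add, Matrix.transpose_mul, Matrix.transpose_mul]
    rw [Matrix.add_mul, Matrix.mul_add, Matrix.mul_add]
    rw [hDD, L2, L3, L4, L5]
    module
  rw [Matrix.transpose_smul, Matrix.smul_mul, Matrix.mul_smul, hX, smul_smul, smul_smul]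
  have h1 : s⁻¹ * s⁻¹ * s ^ 2 = 1 := by field_simp
  rw [h1, one_smul]

private lemma repr_aux {N : Type*} [Fintype N] (a b c : ℝ)
    (U : Matrix (Fin 3) (Fin 3) ℝ) (V : Matrix (Fin 3) N ℝ) (W : Matrix N (Fin 3) ℝ)
    (D : Matrix N N ℝ) :
    D - a • (W * V) + b • (W * U * V) - c • (W * U ^ 2 * V)
      = D + W * ((-a) • 1 + b • U + (-c) • U ^ 2) * V := by
  simp only [Matrix.mul_add, Matrix.add_mul, Matrix.mul_smul, Matrix.smul_mul, Matrix.mul_one,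
    Matrix.one_mul, Matrix.mul_assoc]
  module

theorem stmt_13 (n : ℕ) (hn : 2 ≤ n)
    (U : Matrix (Fin 3) (Fin 3) ℝ) (V : Matrix (Fin 3) (Fin (4 * n - 3)) ℝ)
    (W : Matrix (Fin (4 * n - 3)) (Fin 3) ℝ)
    (D : Matrix (Fin (4 * n - 3)) (Fin (4 * n - 3)) ℝ)
    (hent : ∀ i j, Matrix.fromBlocks U V W D i j = 1 ∨ Matrix.fromBlocks U V W D i j = -1)
    (hH : Matrix.fromBlocks U V W D * (Matrix.fromBlocks U V W D)ᵀ
            = (4 * (n : ℝ)) • 1)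
    (hU : U ^ 3 = U ^ 2 + (4 : ℝ) • U - (4 : ℝ) • (1 : Matrix (Fin 3) (Fin 3) ℝ)) :
    (let s := Real.sqrt (4 * (n : ℝ));
     let Δ₁ := 4 * (n : ℝ) * s - 4 * (n : ℝ) - 4 * s + 4;
     let Δ₂ := 4 * (n : ℝ) * s + 4 * (n : ℝ) - 4 * s - 4;
     let Y₁ := s⁻¹ • (D - ((4 * (n : ℝ) + s - 4) / Δ₂) • (W * V)
        + ((s + 1) / Δ₂) • (W * U * V) - (1 / Δ₂) • (W * U ^ 2 * V));
     let Y₂ := s⁻¹ • (D + ((4 * (n : ℝ) - s - 4) / Δ₁) • (W * V)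
        + ((s - 1) / Δ₁) • (W * U * V) + (1 / Δ₁) • (W * U ^ 2 * V));
     Y₁ * Y₁ᵀ = 1 ∧ Y₂ * Y₂ᵀ = 1) := by
  set s : ℝ := Real.sqrt (4 * (n : ℝ)) with hs_def
  have h4n : (0:ℝ) ≤ 4 * n := by positivity
  have hs2 : s ^ 2 = 4 * (n : ℝ) := Real.sq_sqrt h4n
  have hsnn : 0 ≤ s := hs_def ▸ Real.sqrt_nonneg _
  have hn' : (2:ℝ) ≤ (n:ℝ) := by exact_mod_cast hn
  have h8 : (8:ℝ) ≤ s ^ 2 := by rw [hs2]; linarith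
  have hs_gt2 : 2 < s := by nlinarith [hsnn, h8]
  have hs_ne : s ≠ 0 := by nlinarith
  -- block equations
  have hB : Matrix.fromBlocks U V W D * (Matrix.fromBlocks U V W D)ᵀ
      = Matrix.fromBlocks (U * Uᵀ + V * Vᵀ) (U * Wᵀ + V * Dᵀ)
        (W * Uᵀ + D * Vᵀ) (W * Wᵀ + D * Dᵀ) := by
    rw [Matrix.fromBlocks_transpose, Matrix.fromBlocks_multiply]
  have hR : (4 * (n : ℝ)) • (1 : Matrix (Fin 3 ⊕ Fin (4 * n - 3)) (Fin 3 ⊕ Fin (4 * n - 3)) ℝ)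
      = Matrix.fromBlocks ((s ^ 2) • 1) 0 0 ((s ^ 2) • 1) := by
    rw [← Matrix.fromBlocks_one, Matrix.fromBlocks_smul, hs2]; simp
  rw [hB, hR] at hH
  have h11 : U * Uᵀ + V * Vᵀ = (s ^ 2) • 1 := by
    have := congrArg Matrix.toBlocks₁₁ hH
    simpa [Matrix.toBlocks_fromBlocks₁₁] using this
  have h21 : W * Uᵀ + D * Vᵀ = 0 := by
    have := congrArg Matrix.toBlocks₂₁ hH
    simpa [Matrix.toBlocks_fromBlocks₂₁] using this
  have h22 : W * Wᵀ + D * Dᵀ = (s ^ 2) • 1 := by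
    have := congrArg Matrix.toBlocks₂₂ hH
    simpa [Matrix.toBlocks_fromBlocks₂₂] using this
  -- powers of U
  have hUU : U * U = U ^ 2 := (sq U).symm
  have h3 : U * U ^ 2 = U ^ 2 + (4 : ℝ) • U - (4 : ℝ) • 1 := by
    rw [show U * U ^ 2 = U ^ 3 from (pow_succ' U 2).symm]; exact hU
  have h3' : U ^ 2 * U = U ^ 2 + (4 : ℝ) • U - (4 : ℝ) • 1 := by
    rw [show U ^ 2 * U = U ^ 3 from (pow_succ U 2).symm]; exact hU
  have hΔ₂ : s ^ 2 * s + s ^ 2 - 4 * s - 4 ≠ 0 := by nlinarith [hs_gt2, sq_nonneg s]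
  have hΔ₁ : s ^ 2 * s - s ^ 2 - 4 * s + 4 ≠ 0 := by nlinarith [hs_gt2, sq_nonneg s]
  have hΔ₂' : -4 - s * 4 + s ^ 2 + s ^ 3 ≠ 0 := by contrapose! hΔ₂; linear_combination hΔ₂
  have hΔ₁' : 4 - s * 4 - s ^ 2 + s ^ 3 ≠ 0 := by contrapose! hΔ₁; linear_combination hΔ₁
  refine ⟨?_, ?_⟩
  · rw [← hs2]
    rw [repr_aux ((s ^ 2 + s - 4) / (s ^ 2 * s + s ^ 2 - 4 * s - 4))
        ((s + 1) / (s ^ 2 * s + s ^ 2 - 4 * s - 4))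
        (1 / (s ^ 2 * s + s ^ 2 - 4 * s - 4)) U V W D]
    refine matrix_aux s 1 hs_ne (by norm_num) U V W D h11 h21 h22 _ ?_ ?_
    · simp only [Matrix.mul_add, Matrix.add_mul, smul_mul_assoc, mul_smul_comm, one_mul,
        mul_one, smul_smul, hUU, h3]
      simp only [smul_sub, smul_add, smul_smul]
      match_scalars <;> ring_nf <;> linear_combination (-1 : ℝ) * mul_inv_cancel₀ hΔ₂'
    · simp only [Matrix.mul_add, Matrix.add_mul, smul_mul_assoc, mul_smul_comm, one_mul,
        mul_one, smul_smul, hUU, h3']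
      simp only [smul_sub, smul_add, smul_smul]
      match_scalars <;> ring_nf <;> linear_combination (-1 : ℝ) * mul_inv_cancel₀ hΔ₂'
  · rw [← hs2]
    rw [show ∀ (X : Matrix (Fin (4*n-3)) (Fin (4*n-3)) ℝ) (a b c : ℝ),
        X + a • (W * V) + b • (W * U * V) + c • (W * U ^ 2 * V)
          = X - (-a) • (W * V) + b • (W * U * V) - (-c) • (W * U ^ 2 * V) from
      fun X a b c => by module]
    rw [repr_aux (-((s ^ 2 - s - 4) / (s ^ 2 * s - s ^ 2 - 4 * s + 4)))
        ((s - 1) / (s ^ 2 * s - s ^ 2 - 4 * s + 4))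
        (-(1 / (s ^ 2 * s - s ^ 2 - 4 * s + 4))) U V W D]
    refine matrix_aux s (-1) hs_ne (by norm_num) U V W D h11 h21 h22 _ ?_ ?_
    · simp only [Matrix.mul_add, Matrix.add_mul, smul_mul_assoc, mul_smul_comm, one_mul,
        mul_one, smul_smul, hUU, h3]
      simp only [smul_sub, smul_add, smul_smul]
      match_scalars <;> ring_nf <;> linear_combination mul_inv_cancel₀ hΔ₁'
    · simp only [Matrix.mul_add, Matrix.add_mul, smul_mul_assoc, mul_smul_comm, one_mul,
        mul_one, smul_smul, hUU, h3']
      simp only [smul_sub, smul_add, smul_smul]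
      match_scalars <;> ring_nf <;> linear_combination mul_inv_cancel₀ hΔ₁'
end

section
/- For every natural n ≥ 1, the real number (√(4n−1)/√(4n)) · ((√(4n) + 2)/(√(4n) + 1)) − 1 is strictly less than 1/(2√n). -/
theorem stmt_14 (n : ℕ) (hn : 1 ≤ n) :
    Real.sqrt (4 * (n : ℝ) - 1) / Real.sqrt (4 * (n : ℝ)) *
        ((Real.sqrt (4 * (n : ℝ)) + 2) / (Real.sqrt (4 * (n : ℝ)) + 1)) - 1
      < 1 / (2 * Real.sqrt n) := by
  have hn1 : (1 : ℝ) ≤ (n : ℝ) := by exact_mod_cast hn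
  set s := Real.sqrt (4 * (n : ℝ)) with hs_def
  have hs : 2 ≤ s := by
    rw [hs_def]
    have : (4 : ℝ) ≤ 4 * (n : ℝ) := by nlinarith
    nlinarith [Real.sq_sqrt (by linarith : (0:ℝ) ≤ 4 * (n:ℝ)),
      Real.sqrt_nonneg (4 * (n : ℝ)), Real.sqrt_le_sqrt this]
  have hs0 : 0 < s := by linarith
  have hseq : s = 2 * Real.sqrt n := by
    rw [hs_def, show (4 : ℝ) * n = 2 ^ 2 * n by ring, Real.sqrt_mul (by positivity),
      Real.sqrt_sq (by norm_num)]
  have hfrac : Real.sqrt (4 * (n : ℝ) - 1) / s ≤ 1 := by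
    apply div_le_one_of_le₀ _ hs0.le
    apply Real.sqrt_le_sqrt
    linarith
  have hX : (0 : ℝ) ≤ (s + 2) / (s + 1) := by positivity
  have h1 : Real.sqrt (4 * (n : ℝ) - 1) / s * ((s + 2) / (s + 1)) ≤ (s + 2) / (s + 1) := by
    nlinarith
  have h2 : (s + 2) / (s + 1) - 1 < 1 / s := by
    rw [div_sub_one (by linarith), div_lt_div_iff₀ (by linarith) hs0]
    ring_nf
    linarith
  rw [← hseq]
  linarith
end

section
/- For every natural n ≥ 4, the real number (√(4n−3)/√(4n)) · ((4n√(4n) + 8n + 2√(4n) + 10)/(4n√(4n) − 4n − 4√(4n) + 4)) − 1 is strictly less than 4/√n. -/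
theorem stmt_16 (n : ℕ) (hn : 4 ≤ n) :
    Real.sqrt (4 * (n : ℝ) - 3) / Real.sqrt (4 * (n : ℝ)) *
        ((4 * (n : ℝ) * Real.sqrt (4 * (n : ℝ)) + 8 * (n : ℝ) +
            2 * Real.sqrt (4 * (n : ℝ)) + 10) /
          (4 * (n : ℝ) * Real.sqrt (4 * (n : ℝ)) - 4 * (n : ℝ) -
            4 * Real.sqrt (4 * (n : ℝ)) + 4)) - 1
      < 4 / Real.sqrt n := by
  set x := Real.sqrt n with hxdef
  have hn4 : (4 : ℝ) ≤ (n : ℝ) := by exact_mod_cast hn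
  have hx2 : x ^ 2 = (n : ℝ) := Real.sq_sqrt (by positivity)
  have hx : 2 ≤ x := by
    have : Real.sqrt 4 ≤ x := Real.sqrt_le_sqrt hn4
    rwa [show (4:ℝ) = 2^2 by norm_num, Real.sqrt_sq (by norm_num)] at this
  have hxpos : 0 < x := by linarith
  have h4n : Real.sqrt (4 * (n : ℝ)) = 2 * x := by
    rw [show (4 * (n : ℝ)) = (2 * x)^2 by nlinarith]
    exact Real.sqrt_sq (by positivity)
  have hs0 : 0 ≤ Real.sqrt (4 * (n : ℝ) - 3) := Real.sqrt_nonneg _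
  have hqpos : (0:ℝ) < (8 * x ^ 2 - 3) / (4 * x) := by
    apply div_pos (by nlinarith) (by positivity)
  have hs : Real.sqrt (4 * (n : ℝ) - 3) ≤ (8 * x ^ 2 - 3) / (4 * x) := by
    rw [show (8 * x ^ 2 - 3) / (4 * x) = Real.sqrt (((8 * x ^ 2 - 3) / (4 * x))^2) from
      (Real.sqrt_sq hqpos.le).symm]
    apply Real.sqrt_le_sqrt
    rw [div_pow]
    rw [le_div_iff₀ (by positivity)]
    nlinarith
  have hs' : 4 * x * Real.sqrt (4 * (n : ℝ) - 3) ≤ 8 * x ^ 2 - 3 := by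
    have := mul_le_mul_of_nonneg_left hs (by positivity : (0:ℝ) ≤ 4 * x)
    rwa [mul_div_cancel₀ _ (by positivity : (4*x) ≠ 0)] at this
  set y := Real.sqrt (4 * (n : ℝ) - 3) with hy
  rw [h4n, ← hx2]
  have hD : (0:ℝ) < 4 * x ^ 2 * (2 * x) - 4 * x ^ 2 - 4 * (2 * x) + 4 := by nlinarith
  have hN : (0:ℝ) < 4 * x ^ 2 * (2 * x) + 8 * x ^ 2 + 2 * (2 * x) + 10 := by nlinarith
  rw [div_mul_div_comm, sub_lt_iff_lt_add, show (4:ℝ)/x + 1 = (4 + x)/x by field_simp,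
    div_lt_div_iff₀ (by positivity) hxpos]
  nlinarith [mul_le_mul_of_nonneg_right hs' hN.le, sq_nonneg (x - 2), sq_nonneg x,
    mul_pos hxpos hD, mul_pos (mul_pos hxpos hxpos) hD]
end

section
/- Let s be a prime power and k a natural with 1 ≤ k < s, and set d = k·s. Then there exists a resolvable block design on a point set X of size d having s parallel classes, each parallel class consisting of s pairwise disjoint blocks of size k whose union is X, such that any two blocks taken from two different parallel classes intersect in at most one point. -/
theorem stmt_18 (k s : ℕ) (hk : 1 ≤ k) (hks : k < s) (hs : IsPrimePow s) :
    ∃ P : Fin s → Fin s → Finset (Fin (k * s)),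
      (∀ l, ∀ i j : Fin s, i ≠ j → Disjoint (P l i) (P l j)) ∧
      (∀ l i, (P l i).card = k) ∧
      (∀ l, Finset.univ.biUnion (P l) = (Finset.univ : Finset (Fin (k * s)))) ∧
      (∀ l m i j, l ≠ m → (P l i ∩ P m j).card ≤ 1) := by
  obtain ⟨p, n, hp, hn, rfl⟩ := hs
  haveI : Fact p.Prime := ⟨hp.nat_prime⟩
  haveI : Fintype (GaloisField p n) := Fintype.ofFinite _
  have hcard : Fintype.card (GaloisField p n) = p ^ n := by
    rw [← Nat.card_eq_fintype_card, GaloisField.card p n hn.ne']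
  have e : Fin (p ^ n) ≃ GaloisField p n := (Fintype.equivFinOfCardEq hcard).symm
  have ha : Nonempty (Fin k ↪ GaloisField p n) := Function.Embedding.nonempty_of_card_le (by
    rw [hcard, Fintype.card_fin]; exact hks.le)
  obtain ⟨a⟩ := ha
  set φ : Fin k × Fin (p ^ n) ≃ Fin (k * p ^ n) := finProdFinEquiv
  refine ⟨fun l i => Finset.univ.image (fun x : Fin k =>
    φ (x, e.symm (e l * a x + e i))), ?_, ?_, ?_, ?_⟩
  · intro l i j hij
    rw [Finset.disjoint_left]
    rintro z hz hz'
    simp only [Finset.mem_image, Finset.mem_univ, true_and] at hz hz'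
    obtain ⟨x, hx⟩ := hz
    obtain ⟨y, hy⟩ := hz'
    rw [← hy] at hx
    have := φ.injective hx
    have hxy : x = y := (Prod.mk.injEq _ _ _ _).mp this |>.1
    have h2 := e.symm.injective ((Prod.mk.injEq _ _ _ _).mp this).2
    rw [hxy] at h2
    exact hij (e.injective (add_left_cancel h2))
  · intro l i
    rw [Finset.card_image_of_injective _ (fun x y hxy => by
      have := φ.injective hxy
      exact ((Prod.mk.injEq _ _ _ _).mp this).1), Finset.card_univ, Fintype.card_fin]
  · intro l
    ext z
    simp only [Finset.mem_biUnion, Finset.mem_univ, true_and, Finset.mem_image, iff_true]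
    refine ⟨e.symm (e (φ.symm z).2 - e l * a (φ.symm z).1), (φ.symm z).1, ?_⟩
    rw [Equiv.apply_symm_apply, add_sub_cancel, Equiv.symm_apply_apply]
    conv_rhs => rw [← Equiv.apply_symm_apply φ z]
  · intro l m i j hlm
    rw [Finset.card_le_one]
    intro z hz z' hz'
    simp only [Finset.mem_inter, Finset.mem_image, Finset.mem_univ, true_and] at hz hz'
    obtain ⟨⟨x, hx⟩, ⟨y, hy⟩⟩ := hz
    obtain ⟨⟨x', hx'⟩, ⟨y', hy'⟩⟩ := hz'
    -- from hx, hy : same z, so x = y and line equations agree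
    have hlmne : e l ≠ e m := fun h => hlm (e.injective h)
    have key : ∀ (u v : Fin k), φ (u, e.symm (e l * a u + e i)) = φ (v, e.symm (e m * a v + e j)) → u = v := by
      intro u v h
      have := φ.injective h
      have h1 : u = v := ((Prod.mk.injEq _ _ _ _).mp this).1
      exact h1
    have eq1 : ∀ (u v : Fin k), φ (u, e.symm (e l * a u + e i)) = φ (v, e.symm (e m * a v + e j)) →
        e l * a u + e i = e m * a u + e j := by
      intro u v h
      have h1 := key u v h
      have h2 := e.symm.injective ((Prod.mk.injEq _ _ _ _).mp (φ.injective h)).2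
      rw [← h1] at h2
      exact h2
    -- x determined uniquely
    have hxeq : a x = a x' := by
      have e1 := eq1 x y (hx.trans hy.symm)
      have e2 := eq1 x' y' (hx'.trans hy'.symm)
      have : (e l - e m) * a x = (e l - e m) * a x' := by ring_nf; ring_nf at e1 e2; linear_combination e1 - e2
      exact mul_left_cancel₀ (sub_ne_zero.mpr hlmne) this
    have : x = x' := a.injective hxeq
    rw [← hx, ← hx', this]
end

section
/- Let k, s be naturals with 1 ≤ k < s and s a prime power, and set d = k·s. Suppose there exist a k × k real orthogonal matrix Y and a real ε ≥ 0 such that |Y_{ij}| ≤ (1 + ε)/√k for all indices i, j. Then there exist s real orthogonal matrices M₁, …, M_s of order d (whose columns form s orthonormal bases of ℝ^d) such that for all l ≠ m and all column indices i, j, the inner product of the i-th column of M_l with the j-th column of M_m satisfies |((M_l)ᵀ · M_m)_{ij}| ≤ (1 + ε)²/k. -/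
open Matrix

theorem stmt_19 (k s : ℕ) (hk : 1 ≤ k) (hks : k < s) (hs : IsPrimePow s)
    (Y : Matrix (Fin k) (Fin k) ℝ) (hY : Y * Yᵀ = 1)
    (ε : ℝ) (hε : 0 ≤ ε) (hYent : ∀ i j, |Y i j| ≤ (1 + ε) / Real.sqrt k) :
    ∃ M : Fin s → Matrix (Fin (k * s)) (Fin (k * s)) ℝ,
      (∀ l, M l * (M l)ᵀ = 1) ∧
      ∀ l m, l ≠ m → ∀ i j, |((M l)ᵀ * M m) i j| ≤ (1 + ε) ^ 2 / k := by
  classical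
  obtain ⟨p, n, hp, hn, rfl⟩ := hs
  haveI : Fact p.Prime := ⟨hp.nat_prime⟩
  haveI : Fintype (GaloisField p n) := Fintype.ofFinite _
  have hcard : Fintype.card (GaloisField p n) = p ^ n := by
    rw [← Nat.card_eq_fintype_card]; exact GaloisField.card p n hn.ne'
  let e : Fin (p ^ n) ≃ GaloisField p n := (Fintype.equivFinOfCardEq hcard).symm
  let ι : Fin k → GaloisField p n := fun b => e (Fin.castLE hks.le b)
  have hι : Function.Injective ι := fun b b' h =>
    Fin.castLE_injective hks.le (e.injective h)
  let N : Fin (p ^ n) → Matrix (Fin k × Fin (p ^ n)) (Fin k × Fin (p ^ n)) ℝ :=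
    fun l bu at' => if bu.2 = e.symm (e at'.2 + e l * ι bu.1) then Y at'.1 bu.1 else 0
  have hmul : ∀ l m a t a' t', ((N l)ᵀ * N m) (a, t) (a', t') =
      ∑ b : Fin k, if e t + e l * ι b = e t' + e m * ι b then Y a b * Y a' b else 0 := by
    intro l m a t a' t'
    rw [Matrix.mul_apply, Fintype.sum_prod_type]
    refine Finset.sum_congr rfl fun b _ => ?_
    simp only [transpose_apply, N, ite_mul, mul_ite, zero_mul, mul_zero]
    rw [Finset.sum_ite_eq']
    simp only [Finset.mem_univ, if_true, e.symm.injective.eq_iff, transpose_apply, ite_mul, zero_mul]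
    change (if _ = _ then Y a b else 0) * Y a' b = _
    simp only [ite_mul, zero_mul, e.symm.injective.eq_iff]
    exact if_congr eq_comm rfl rfl
  have horth : ∀ l, (N l)ᵀ * N l = 1 := by
    intro l
    ext ⟨a, t⟩ ⟨a', t'⟩
    rw [hmul]
    have hc : ∀ b : Fin k, (e t + e l * ι b = e t' + e l * ι b) ↔ t = t' := by
      intro b
      rw [add_left_inj, e.injective.eq_iff]
    simp only [hc]
    by_cases h : t = t'
    · subst h
      have := congrFun (congrFun hY a) a'
      rw [Matrix.mul_apply] at this
      simp only [transpose_apply] at this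
      simp [this, Matrix.one_apply, Prod.ext_iff]
    · simp [h, Matrix.one_apply, Prod.ext_iff]
  -- entrywise bound
  have hB : (0:ℝ) ≤ (1 + ε) / Real.sqrt k := by
    apply div_nonneg (by linarith) (Real.sqrt_nonneg _)
  have hBsq : (1 + ε) / Real.sqrt k * ((1 + ε) / Real.sqrt k) = (1 + ε) ^ 2 / k := by
    rw [div_mul_div_comm, Real.mul_self_sqrt (by positivity), sq]
  have hcross : ∀ l m, l ≠ m → ∀ a t a' t',
      |((N l)ᵀ * N m) (a, t) (a', t')| ≤ (1 + ε) ^ 2 / k := by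
    intro l m hlm a t a' t'
    rw [hmul]
    have hlm' : e l - e m ≠ 0 := sub_ne_zero.mpr (fun h => hlm (e.injective h))
    have hcond : ∀ b : Fin k, (e t + e l * ι b = e t' + e m * ι b) ↔
        ι b = (e t' - e t) / (e l - e m) := by
      intro b
      rw [eq_div_iff hlm', mul_comm (ι b), sub_mul]
      constructor <;> intro h <;> linear_combination h
    simp only [hcond]
    rw [← Finset.sum_filter]
    have hcard1 : (Finset.univ.filter
        (fun b : Fin k => ι b = (e t' - e t) / (e l - e m))).card ≤ 1 := by
      refine Finset.card_le_one.mpr fun b hb b' hb' => ?_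
      simp only [Finset.mem_filter] at hb hb'
      exact hι (hb.2.trans hb'.2.symm)
    calc |∑ b ∈ Finset.univ.filter (fun b : Fin k => ι b = (e t' - e t) / (e l - e m)),
            Y a b * Y a' b|
        ≤ ∑ b ∈ Finset.univ.filter (fun b : Fin k => ι b = (e t' - e t) / (e l - e m)),
            |Y a b * Y a' b| := Finset.abs_sum_le_sum_abs _ _
      _ ≤ ∑ b ∈ Finset.univ.filter (fun b : Fin k => ι b = (e t' - e t) / (e l - e m)),
            ((1 + ε) ^ 2 / k) := by
          refine Finset.sum_le_sum fun b _ => ?_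
          rw [abs_mul, ← hBsq]
          exact mul_le_mul (hYent a b) (hYent a' b) (abs_nonneg _) hB
      _ ≤ 1 * ((1 + ε) ^ 2 / k) := by
          rw [Finset.sum_const, nsmul_eq_mul]
          refine mul_le_mul_of_nonneg_right ?_ (by positivity)
          exact_mod_cast hcard1
      _ = (1 + ε) ^ 2 / k := one_mul _
  let φ : Fin k × Fin (p ^ n) ≃ Fin (k * p ^ n) := finProdFinEquiv
  refine ⟨fun l => (N l).submatrix φ.symm φ.symm, fun l => ?_, fun l m hlm i j => ?_⟩
  · rw [transpose_submatrix, submatrix_mul_equiv,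
      mul_eq_one_comm.mpr (horth l), submatrix_one_equiv]
  · rw [transpose_submatrix, submatrix_mul_equiv]
    have := hcross l m hlm (φ.symm i).1 (φ.symm i).2 (φ.symm j).1 (φ.symm j).2
    simpa using this
end
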